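/- arXiv:1003.0580 — 4 statements merged into one kernel-verified Lean document; each statement's English description precedes it below -/
import Mathlib

section
/- Let R = Q × [t−r, t+r) ∈ ℛ with r ≥ 1 and with Q a dyadic cube of side length L satisfying eᵗe^{8r}/2 ≤ L < eᵗe^{8r}. Then R₃ = Q × [t−5r, t+r) is a parent of R; moreover the set R'' = Q × [t−5r, t−r) belongs to ℛ, R₃ = R ∪ R'', ρ(R) = ρ(R'')/2 = ρ(R₃)/3, and R₃ is also a parent of R''. -/
open MeasureTheory Set Filter
open scoped ENNReal NNReal Topology

noncomputable section

/-- The `ax+b`-group `S = ℝⁿ ⋉ ℝ`, as a measure space with its right Haar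
measure `ρ`, which is Lebesgue measure `dx dt` on `ℝⁿ × ℝ`. -/
abbrev Sp (n : ℕ) : Type := (Fin n → ℝ) × ℝ

/-- `Q` is a dyadic cube in `ℝⁿ` with side length `L` and center `c`. -/
def IsDyadicCube (n : ℕ) (Q : Set (Fin n → ℝ)) (L : ℝ) (c : Fin n → ℝ) : Prop :=
  ∃ (k : ℤ) (m : Fin n → ℤ), L = 2 ^ k ∧
    Q = {x | ∀ i, (m i : ℝ) * 2 ^ k ≤ x i ∧ x i < ((m i : ℝ) + 1) * 2 ^ k} ∧
    c = fun i => ((m i : ℝ) + 1 / 2) * 2 ^ k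

/-- Admissibility of the parameters `(Q, L, c, t, r)` of a Calderón–Zygmund set:
`Q` is a dyadic cube with side length `L` and center `c`, `r > 0`, and
`e² eᵗ r ≤ L < e⁸ eᵗ r` if `r < 1`, while `eᵗ e^{2r} ≤ L < eᵗ e^{8r}` if `r ≥ 1`. -/
def CZParam (n : ℕ) (Q : Set (Fin n → ℝ)) (L : ℝ) (c : Fin n → ℝ) (t r : ℝ) : Prop :=
  IsDyadicCube n Q L c ∧ 0 < r ∧
    (r < 1 → Real.exp 2 * Real.exp t * r ≤ L ∧ L < Real.exp 8 * Real.exp t * r) ∧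
    (1 ≤ r → Real.exp t * Real.exp (2 * r) ≤ L ∧ L < Real.exp t * Real.exp (8 * r))

/-- The set `Q × [t - r, t + r)` in `S`. -/
def czSet (n : ℕ) (Q : Set (Fin n → ℝ)) (t r : ℝ) : Set (Sp n) :=
  Q ×ˢ Set.Ico (t - r) (t + r)

/-- `R` is a Calderón–Zygmund set, i.e. a member of the family `ℛ`. -/
def IsCZSet (n : ℕ) (R : Set (Sp n)) : Prop :=
  ∃ Q L c t r, CZParam n Q L c t r ∧ R = czSet n Q t r

/-- Inverse hyperbolic cosine. -/
def arcoshR (x : ℝ) : ℝ := Real.log (x + Real.sqrt (x ^ 2 - 1))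

/-- The left-invariant Riemannian (hyperbolic) metric on `S`, given by
`cosh d((x,t),(x',t')) = (e^{t'-t} + e^{t-t'} + e^{-t-t'} |x-x'|²) / 2`. -/
def hypDist (n : ℕ) (p q : Sp n) : ℝ :=
  arcoshR ((Real.exp (q.2 - p.2) + Real.exp (p.2 - q.2) +
    Real.exp (-p.2 - q.2) * (∑ i, (p.1 i - q.1 i) ^ 2)) / 2)

/-- The open ball of center `p` and radius `r` for the hyperbolic metric. -/
def hypBall (n : ℕ) (p : Sp n) (r : ℝ) : Set (Sp n) := {q | hypDist n p q < r}

/-- The maximal function associated with a family `𝒜` of subsets of `S`: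
`x ↦ sup { ρ(R)⁻¹ ∫_R |f| dρ : R ∈ 𝒜, x ∈ R }`. -/
def maximalFn (n : ℕ) (𝒜 : Set (Set (Sp n))) (f : Sp n → ℝ) (x : Sp n) : ℝ≥0∞ :=
  ⨆ R ∈ 𝒜, ⨆ (_ : x ∈ R), (volume R)⁻¹ * ∫⁻ y in R, ‖f y‖₊ ∂volume

/-- The sharp maximal function associated with a family `𝒜` of subsets of `S`:
`x ↦ sup { ρ(R)⁻¹ ∫_R |f - f_R| dρ : R ∈ 𝒜, x ∈ R }`, where `f_R = ρ(R)⁻¹ ∫_R f dρ`. -/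
def sharpFn (n : ℕ) (𝒜 : Set (Set (Sp n))) (f : Sp n → ℝ) (x : Sp n) : ℝ≥0∞ :=
  ⨆ R ∈ 𝒜, ⨆ (_ : x ∈ R), (volume R)⁻¹ *
    ∫⁻ y in R, ENNReal.ofReal |f y - (volume R).toReal⁻¹ * ∫ z in R, f z ∂volume| ∂volume

/-- The `L^p`-norm (`p ∈ (0,∞]`) of an `ℝ≥0∞`-valued function. -/
def lpNormE {α : Type*} [MeasurableSpace α] (g : α → ℝ≥0∞) (p : ℝ≥0∞)
    (μ : Measure α) : ℝ≥0∞ :=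
  if p = ∞ then essSup g μ else (∫⁻ x, g x ^ p.toReal ∂μ) ^ (1 / p.toReal)

/-- `M` is a parent of `R`: both are Calderón–Zygmund sets, `M` can be decomposed into
`k` pairwise disjoint Calderón–Zygmund sets (`k = 2` or `k = 2ⁿ`) one of which is `R`,
and `(3/2) ρ(R) ≤ ρ(M) ≤ max{3, 2ⁿ} ρ(R)`. -/
def IsParent (n : ℕ) (M R : Set (Sp n)) : Prop :=
  IsCZSet n M ∧ IsCZSet n R ∧
    (∃ k : ℕ, (k = 2 ∨ k = 2 ^ n) ∧ ∃ Rs : Fin k → Set (Sp n),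
      (∀ i, IsCZSet n (Rs i)) ∧ Pairwise (Function.onFun Disjoint Rs) ∧
      M = ⋃ i, Rs i ∧ ∃ i, Rs i = R) ∧
    (3 / 2 : ℝ≥0∞) * volume R ≤ volume M ∧
    volume M ≤ (max 3 (2 ^ n) : ℕ) * volume R

/-- A dyadic grid on `S`: a collection `{𝒟_j}_{j ∈ ℤ}` of partitions of `S` into
pairwise disjoint Calderón–Zygmund sets with the nesting, parent, splitting and
limiting properties (i)–(v) of Theorem 3.1. -/
def IsDyadicGrid (n : ℕ) (D : ℤ → Set (Set (Sp n))) : Prop :=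
  (∀ j, ∀ R ∈ D j, IsCZSet n R) ∧
  (∀ j, (D j).PairwiseDisjoint id) ∧
  (∀ j, ⋃₀ D j = Set.univ) ∧
  (∀ l k : ℤ, l ≤ k → ∀ R ∈ D l, ∀ R' ∈ D k, R ⊆ R' ∨ R ∩ R' = ∅) ∧
  (∀ j, ∀ R ∈ D j, ∃! R', R' ∈ D (j + 1) ∧ R ⊆ R') ∧
  (∀ j, ∀ R ∈ D j, ∀ R' ∈ D (j + 1), R ⊆ R' → volume R' ≤ 2 ^ n * volume R) ∧
  (∀ j, ∀ R ∈ D j, ∃ k : ℕ, (k = 2 ∨ k = 2 ^ n) ∧ ∃ Rs : Fin k → Set (Sp n),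
    (∀ i, Rs i ∈ D (j - 1)) ∧ Pairwise (Function.onFun Disjoint Rs) ∧ R = ⋃ i, Rs i ∧
    ∀ i, volume R / 2 ^ n ≤ volume (Rs i) ∧ volume (Rs i) ≤ (2 / 3 : ℝ≥0∞) * volume R) ∧
  (∀ x : Sp n, ∀ Rx : ℤ → Set (Sp n), (∀ j, Rx j ∈ D j ∧ x ∈ Rx j) →
    Tendsto (fun j => volume (Rx j)) atBot (nhds 0) ∧
    Tendsto (fun j => volume (Rx j)) atTop (nhds ⊤))

/-- `a` is an `H¹`-atom supported in a set of the family `𝒜`: `a ∈ L¹` is supported in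
some `R ∈ 𝒜`, `‖a‖_∞ ≤ ρ(R)⁻¹` and `∫_S a dρ = 0`. -/
def IsAtomIn (n : ℕ) (𝒜 : Set (Set (Sp n))) (a : Sp n → ℂ) : Prop :=
  ∃ R ∈ 𝒜, Function.support a ⊆ R ∧
    (∀ᵐ x ∂(volume : Measure (Sp n)), ‖a x‖ ≤ (volume R).toReal⁻¹) ∧
    Integrable a volume ∧ ∫ x, a x ∂(volume : Measure (Sp n)) = 0

/-- `g = ∑_j lam_j a_j` is an atomic decomposition of `g` with atoms supported in sets of
the family `𝒜`: the `a_j` are atoms, `∑_j |lam_j| < ∞` and the series converges to `g`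
in `L¹`. -/
def IsAtomicDecomp (n : ℕ) (𝒜 : Set (Set (Sp n))) (g : Sp n → ℂ)
    (lam : ℕ → ℂ) (a : ℕ → Sp n → ℂ) : Prop :=
  Integrable g volume ∧ (∀ j, IsAtomIn n 𝒜 (a j)) ∧ Summable (fun j => ‖lam j‖) ∧
    Tendsto (fun N => ∫ x, ‖g x - ∑ j ∈ Finset.range N, lam j * a j x‖ ∂volume)
      atTop (nhds 0)

/-- The atomic `H¹`-norm of `g` associated with the family `𝒜`: the infimum of
`∑_j |lam_j|` over all atomic decompositions of `g` with atoms supported in sets of `𝒜`. -/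
def H1Norm (n : ℕ) (𝒜 : Set (Set (Sp n))) (g : Sp n → ℂ) : ℝ :=
  sInf {s : ℝ | ∃ lam a, IsAtomicDecomp n 𝒜 g lam a ∧ s = ∑' j, ‖lam j‖}

end
/-- Let `R = Q × [t−r, t+r) ∈ ℛ` with `r ≥ 1` and
`eᵗe^{8r}/2 ≤ L < eᵗe^{8r}`. Then `R₃ = Q × [t−5r, t+r)` is a parent of `R`; moreover
`R'' = Q × [t−5r, t−r)` belongs to `ℛ`, `R₃ = R ∪ R''`, `ρ(R) = ρ(R'')/2 = ρ(R₃)/3`, and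
`R₃` is also a parent of `R''`. -/
theorem parent_vertical_down (n : ℕ) (hn : 1 ≤ n) (Q : Set (Fin n → ℝ)) (L : ℝ)
    (c : Fin n → ℝ) (t r : ℝ) (h : CZParam n Q L c t r) (hr : 1 ≤ r)
    (hL₁ : Real.exp t * Real.exp (8 * r) / 2 ≤ L)
    (hL₂ : L < Real.exp t * Real.exp (8 * r)) :
    IsParent n (Q ×ˢ Set.Ico (t - 5 * r) (t + r)) (czSet n Q t r) ∧
    IsCZSet n (Q ×ˢ Set.Ico (t - 5 * r) (t - r)) ∧
    Q ×ˢ Set.Ico (t - 5 * r) (t + r) = czSet n Q t r ∪ Q ×ˢ Set.Ico (t - 5 * r) (t - r) ∧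
    volume (czSet n Q t r) = volume (Q ×ˢ Set.Ico (t - 5 * r) (t - r)) / 2 ∧
    volume (czSet n Q t r) = volume (Q ×ˢ Set.Ico (t - 5 * r) (t + r)) / 3 ∧
    IsParent n (Q ×ˢ Set.Ico (t - 5 * r) (t + r)) (Q ×ˢ Set.Ico (t - 5 * r) (t - r)) := by
  obtain ⟨hQ, hr0, -, -⟩ := h
  have hexp8 : Real.exp t * Real.exp (8 * r) = Real.exp (t + 8 * r) := by
    rw [← Real.exp_add]
  -- CZ set facts
  have hR : IsCZSet n (czSet n Q t r) :=
    ⟨Q, L, c, t, r, ⟨hQ, hr0, fun h1 => absurd h1 (by linarith),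
      fun _ => ⟨by
        calc Real.exp t * Real.exp (2 * r) = Real.exp (t + 2 * r) := by rw [← Real.exp_add]
        _ ≤ Real.exp t * Real.exp (8 * r) / 2 := by
            have e1 : Real.exp t * Real.exp (8 * r)
                = Real.exp (t + 2 * r) * Real.exp (6 * r) := by
              rw [← Real.exp_add, ← Real.exp_add]; congr 1; ring
            nlinarith [Real.add_one_le_exp (6 * r), Real.exp_pos (t + 2 * r), hr]
        _ ≤ L := hL₁, hL₂⟩⟩, rfl⟩
  have hR'' : IsCZSet n (Q ×ˢ Set.Ico (t - 5 * r) (t - r)) := by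
    refine ⟨Q, L, c, t - 3 * r, 2 * r, ⟨hQ, by linarith,
      fun h1 => absurd h1 (by linarith), fun _ => ⟨?_, ?_⟩⟩, ?_⟩
    · calc Real.exp (t - 3 * r) * Real.exp (2 * (2 * r)) = Real.exp (t + r) := by
            rw [← Real.exp_add]; ring_nf
      _ ≤ Real.exp t * Real.exp (8 * r) / 2 := by
          have e1 : Real.exp t * Real.exp (8 * r)
              = Real.exp (t + r) * Real.exp (7 * r) := by
            rw [← Real.exp_add, ← Real.exp_add]; congr 1; ring
          nlinarith [Real.add_one_le_exp (7 * r), Real.exp_pos (t + r), hr]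
      _ ≤ L := hL₁
    · calc L < Real.exp t * Real.exp (8 * r) := hL₂
      _ = Real.exp (t + 8 * r) := hexp8
      _ ≤ Real.exp (t - 3 * r) * Real.exp (8 * (2 * r)) := by
          rw [← Real.exp_add, Real.exp_le_exp]; linarith
    · rw [czSet, show t - 3 * r - 2 * r = t - 5 * r by ring,
        show t - 3 * r + 2 * r = t - r by ring]
  have hR₃ : IsCZSet n (Q ×ˢ Set.Ico (t - 5 * r) (t + r)) := by
    refine ⟨Q, L, c, t - 2 * r, 3 * r, ⟨hQ, by linarith,
      fun h1 => absurd h1 (by linarith), fun _ => ⟨?_, ?_⟩⟩, ?_⟩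
    · calc Real.exp (t - 2 * r) * Real.exp (2 * (3 * r)) = Real.exp (t + 4 * r) := by
            rw [← Real.exp_add]; ring_nf
      _ ≤ Real.exp t * Real.exp (8 * r) / 2 := by
          have e1 : Real.exp t * Real.exp (8 * r)
              = Real.exp (t + 4 * r) * Real.exp (4 * r) := by
            rw [← Real.exp_add, ← Real.exp_add]; congr 1; ring
          nlinarith [Real.add_one_le_exp (4 * r), Real.exp_pos (t + 4 * r), hr]
      _ ≤ L := hL₁
    · calc L < Real.exp t * Real.exp (8 * r) := hL₂
      _ = Real.exp (t + 8 * r) := hexp8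
      _ ≤ Real.exp (t - 2 * r) * Real.exp (8 * (3 * r)) := by
          rw [← Real.exp_add, Real.exp_le_exp]; linarith
    · rw [czSet, show t - 2 * r - 3 * r = t - 5 * r by ring,
        show t - 2 * r + 3 * r = t + r by ring]
  -- volume computations
  have hvol : ∀ a b : ℝ, volume (Q ×ˢ Set.Ico a b) = volume Q * ENNReal.ofReal (b - a) := by
    intro a b
    rw [MeasureTheory.Measure.volume_eq_prod, MeasureTheory.Measure.prod_prod, Real.volume_Ico]
  set u : ℝ≥0∞ := volume Q * ENNReal.ofReal (2 * r) with hu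
  have vR : volume (czSet n Q t r) = u := by
    rw [czSet, hvol, show t + r - (t - r) = 2 * r by ring]
  have vR'' : volume (Q ×ˢ Set.Ico (t - 5 * r) (t - r)) = 2 * u := by
    rw [hvol, show t - r - (t - 5 * r) = 2 * (2 * r) by ring,
      ENNReal.ofReal_mul (by norm_num)]
    rw [ENNReal.ofReal_ofNat]; ring
  have vR₃ : volume (Q ×ˢ Set.Ico (t - 5 * r) (t + r)) = 3 * u := by
    rw [hvol, show t + r - (t - 5 * r) = 3 * (2 * r) by ring,
      ENNReal.ofReal_mul (by norm_num)]
    rw [ENNReal.ofReal_ofNat]; ring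
  -- union and disjointness
  have hunion : Q ×ˢ Set.Ico (t - 5 * r) (t + r)
      = czSet n Q t r ∪ Q ×ˢ Set.Ico (t - 5 * r) (t - r) := by
    rw [czSet, Set.union_comm, ← Set.prod_union,
      Set.Ico_union_Ico_eq_Ico (by linarith) (by linarith)]
  have hdisj : Disjoint (czSet n Q t r) (Q ×ˢ Set.Ico (t - 5 * r) (t - r)) := by
    rw [Set.disjoint_left]
    rintro ⟨x, s⟩ hs1 hs2
    rw [czSet, Set.mem_prod, Set.mem_Ico] at hs1
    rw [Set.mem_prod, Set.mem_Ico] at hs2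
    linarith [hs1.2.1, hs2.2.2]
  have hiUnion : (⋃ i, (![czSet n Q t r, Q ×ˢ Set.Ico (t - 5 * r) (t - r)] : Fin 2 → Set (Sp n)) i)
      = czSet n Q t r ∪ Q ×ˢ Set.Ico (t - 5 * r) (t - r) := by
    ext x
    simp [Set.mem_iUnion, Fin.exists_fin_two]
  have hmax3 : (3 : ℝ≥0∞) ≤ ((max 3 (2 ^ n) : ℕ) : ℝ≥0∞) := by
    have : ((3 : ℕ) : ℝ≥0∞) ≤ ((max 3 (2 ^ n) : ℕ) : ℝ≥0∞) :=
      Nat.cast_le.mpr (le_max_left 3 (2 ^ n))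
    simpa using this
  have hdecomp : ∃ k : ℕ, (k = 2 ∨ k = 2 ^ n) ∧ ∃ Rs : Fin k → Set (Sp n),
      (∀ i, IsCZSet n (Rs i)) ∧ Pairwise (Function.onFun Disjoint Rs) ∧
      Q ×ˢ Set.Ico (t - 5 * r) (t + r) = ⋃ i, Rs i ∧ ∃ i, Rs i = czSet n Q t r := by
    refine ⟨2, Or.inl rfl, ![czSet n Q t r, Q ×ˢ Set.Ico (t - 5 * r) (t - r)],
      ?_, ?_, by rw [hiUnion, hunion], ⟨0, rfl⟩⟩
    · intro i; fin_cases i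
      · simpa using hR
      · simpa using hR''
    · intro i j hij
      fin_cases i <;> fin_cases j <;>
        simp only [Function.onFun, Matrix.cons_val_zero, Matrix.cons_val_one,
          Matrix.head_cons] <;>
        first
          | exact absurd rfl hij
          | exact hdisj
          | exact hdisj.symm
  have hdecomp'' : ∃ k : ℕ, (k = 2 ∨ k = 2 ^ n) ∧ ∃ Rs : Fin k → Set (Sp n),
      (∀ i, IsCZSet n (Rs i)) ∧ Pairwise (Function.onFun Disjoint Rs) ∧
      Q ×ˢ Set.Ico (t - 5 * r) (t + r) = ⋃ i, Rs i ∧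
      ∃ i, Rs i = Q ×ˢ Set.Ico (t - 5 * r) (t - r) := by
    refine ⟨2, Or.inl rfl, ![czSet n Q t r, Q ×ˢ Set.Ico (t - 5 * r) (t - r)],
      ?_, ?_, by rw [hiUnion, hunion], ⟨1, rfl⟩⟩
    · intro i; fin_cases i
      · simpa using hR
      · simpa using hR''
    · intro i j hij
      fin_cases i <;> fin_cases j <;>
        simp only [Function.onFun, Matrix.cons_val_zero, Matrix.cons_val_one,
          Matrix.head_cons] <;>
        first
          | exact absurd rfl hij
          | exact hdisj
          | exact hdisj.symm
  refine ⟨⟨hR₃, hR, hdecomp, ?_, ?_⟩, hR'', hunion, ?_, ?_, ⟨hR₃, hR'', hdecomp'', ?_, ?_⟩⟩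
  · rw [vR, vR₃]
    exact mul_le_mul_left (ENNReal.half_le_self) u
  · rw [vR, vR₃]
    exact mul_le_mul_left hmax3 u
  · rw [vR, vR'', mul_comm, mul_div_assoc, ENNReal.div_self (by norm_num) (by norm_num),
      mul_one]
  · rw [vR, vR₃, mul_comm, mul_div_assoc, ENNReal.div_self (by norm_num) (by norm_num),
      mul_one]
  · rw [vR'', vR₃, ← mul_assoc, ENNReal.div_mul_cancel (by norm_num) (by norm_num)]
  · rw [vR'', vR₃]
    calc (3 : ℝ≥0∞) * u ≤ (((max 3 (2 ^ n) : ℕ) : ℝ≥0∞) * 2) * u :=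
          mul_le_mul_left (hmax3.trans (le_mul_of_one_le_right zero_le one_le_two)) u
    _ = ((max 3 (2 ^ n) : ℕ) : ℝ≥0∞) * (2 * u) := by ring
end

section
/- There exists a collection {𝒟_j}_{j∈ℤ} of partitions of S, each 𝒟_j consisting of pairwise disjoint Calderón–Zygmund sets, such that: (i) for every j ∈ ℤ, S = ∪_{R∈𝒟_j} R; (ii) if ℓ ≤ k, R ∈ 𝒟_ℓ and R' ∈ 𝒟_k, then either R ⊆ R' or R ∩ R' = ∅; (iii) for every j ∈ ℤ and R ∈ 𝒟_j, there exists a unique R' ∈ 𝒟_{j+1} such that R ⊆ R', and it satisfies ρ(R') ≤ 2ⁿρ(R); (iv) for every j ∈ ℤ, every R ∈ 𝒟_j can be decomposed into k mutually disjoint sets R₁, …, R_k ∈ 𝒟_{j−1}, with k = 2 or k = 2ⁿ, such that R = ∪_{i=1}^k Rᵢ and ρ(R)/2ⁿ ≤ ρ(Rᵢ) ≤ (2/3)ρ(R) for all i; (v) for every x ∈ S, denoting by R_j^x the unique set in 𝒟_j containing x, one has ρ(R_j^x) → 0 as j → −∞ and ρ(R_j^x) → ∞ as j → +∞. -/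
open MeasureTheory Set Filter
open scoped ENNReal NNReal Topology

namespace CZGrid
open Real

/-! ### Time interval structure -/

noncomputable def th (m : ℤ) : ℝ := if Even m then 1/3 else 2/3

def eps (m : ℤ) : ℤ := if Even m then 1 else 0

lemma th_mem (m : ℤ) : th m = 1/3 ∨ th m = 2/3 := by
  unfold th; split <;> simp

lemma th_pos (m : ℤ) : 0 < th m := by rcases th_mem m with h | h <;> rw [h] <;> norm_num

lemma th_lt_one (m : ℤ) : th m < 1 := by rcases th_mem m with h | h <;> rw [h] <;> norm_num

lemma two_th_succ (m : ℤ) : 2 * th (m+1) = th m + (eps m : ℝ) := by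
  unfold th eps
  by_cases h : Even m
  · rw [if_pos h, if_pos h, if_neg (by simp [Int.even_add_one, h])]
    norm_num
  · rw [if_neg h, if_neg h, if_pos (Int.even_add_one.mpr h)]
    norm_num

noncomputable def tL (m q : ℤ) : ℝ := (2:ℝ)^m * ((q:ℝ) + th m)

def tI (m q : ℤ) : Set ℝ := Set.Ico (tL m q) (tL m q + (2:ℝ)^m)

noncomputable def tc (m q : ℤ) : ℝ := tL m q + (2:ℝ)^(m-1)

def par (m q : ℤ) : ℤ := (q - eps m) / 2

lemma two_zpow_pos (m : ℤ) : (0:ℝ) < 2^m := zpow_pos (by norm_num) m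

lemma zpow_succ_real (m : ℤ) : (2:ℝ)^m = 2^(m-1) * 2 := by
  rw [← zpow_add_one₀ (by norm_num : (2:ℝ) ≠ 0)]; ring_nf

/-- decomposition `q = 2 * par m q + eps m + ρ`, `ρ ∈ {0,1}`. -/
lemma par_decomp (m q : ℤ) : ∃ ρ : ℤ, (ρ = 0 ∨ ρ = 1) ∧ q = 2 * par m q + eps m + ρ := by
  refine ⟨(q - eps m) % 2, ?_, ?_⟩
  · have h0 := Int.emod_nonneg (q - eps m) (by norm_num : (2:ℤ) ≠ 0)
    have h1 := Int.emod_lt_of_pos (q - eps m) (by norm_num : (0:ℤ) < 2)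
    omega
  · have := Int.mul_ediv_add_emod (q - eps m) 2
    unfold par; omega

lemma tL_par (m q : ℤ) : tL (m+1) (par m q) = (2:ℝ)^m * (2 * (par m q : ℝ) + eps m + th m) := by
  unfold tL
  rw [zpow_add_one₀ (by norm_num : (2:ℝ) ≠ 0)]
  have h := two_th_succ m
  linear_combination (2:ℝ)^m * h

/-- The child interval is contained in its parent interval. -/
lemma tI_subset_par (m q : ℤ) : tI m q ⊆ tI (m+1) (par m q) := by
  obtain ⟨ρ, hρ, hq⟩ := par_decomp m q
  have hL : tL (m+1) (par m q) = tL m q - (2:ℝ)^m * ρ := by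
    rw [tL_par]; unfold tL
    have : (q:ℝ) = 2 * (par m q : ℝ) + (eps m : ℝ) + (ρ:ℝ) := by exact_mod_cast congrArg Int.cast hq
    rw [this]; ring
  intro t ht
  obtain ⟨h1, h2⟩ := ht
  constructor
  · rw [hL]
    have : (0:ℝ) ≤ (2:ℝ)^m * ρ := by
      rcases hρ with h | h <;> rw [h] <;> [simp; positivity]
    linarith
  · rw [hL]
    have h2m : (2:ℝ)^(m+1) = 2^m * 2 := by
      rw [← zpow_add_one₀ (by norm_num : (2:ℝ) ≠ 0)]
    have : (2:ℝ)^m * ρ ≤ 2^m := by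
      rcases hρ with h | h <;> rw [h] <;> [simp [(two_zpow_pos m).le]; simp]
    rw [h2m]; linarith

end CZGrid
namespace CZGrid
open Real

/-! ### Admissible side lengths -/

noncomputable def lowF (t r : ℝ) : ℝ :=
  if r < 1 then Real.exp 2 * Real.exp t * r else Real.exp t * Real.exp (2*r)

noncomputable def highF (t r : ℝ) : ℝ :=
  if r < 1 then Real.exp 8 * Real.exp t * r else Real.exp t * Real.exp (8*r)

lemma lowF_pos (t r : ℝ) (hr : 0 < r) : 0 < lowF t r := by
  unfold lowF; split <;> positivity

lemma highF_pos (t r : ℝ) (hr : 0 < r) : 0 < highF t r := by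
  unfold highF; split <;> positivity

noncomputable def bb (m q : ℤ) : ℤ := ⌈Real.logb 2 (lowF (tc m q) ((2:ℝ)^(m-1)))⌉

noncomputable def aa (m q : ℤ) : ℤ := bb (m+1) (par m q)

lemma exp_le_two_of_le (x : ℝ) (hx : x ≤ 1/2) : Real.exp x ≤ 2 := by
  have h2 := Real.log_two_gt_d9
  have : x ≤ Real.log 2 := by linarith
  calc Real.exp x ≤ Real.exp (Real.log 2) := Real.exp_le_exp.mpr this
    _ = 2 := Real.exp_log (by norm_num)

lemma two_le_exp_one : (2:ℝ) ≤ Real.exp 1 := by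
  have := Real.exp_one_gt_d9; linarith

lemma exp_big (c : ℝ) (hc : 3 ≤ c) : (8:ℝ) ≤ Real.exp c := by
  calc (8:ℝ) = 2^3 := by norm_num
    _ ≤ (Real.exp 1)^3 := by
        have h := two_le_exp_one
        have h0 : (0:ℝ) ≤ 2 := by norm_num
        exact pow_le_pow_left₀ h0 h 3
    _ = Real.exp 3 := by
        rw [← Real.exp_nat_mul]; norm_num
    _ ≤ Real.exp c := Real.exp_le_exp.mpr hc

lemma r_small (m : ℤ) (hm : m < 0) : (2:ℝ)^(m-1) ≤ 1/4 := by
  calc (2:ℝ)^(m-1) ≤ (2:ℝ)^(-2:ℤ) := zpow_le_zpow_right₀ (by norm_num) (by omega)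
    _ = 1/4 := by norm_num

lemma r_big (m : ℤ) (hm : 0 < m) : (1:ℝ) ≤ (2:ℝ)^(m-1) := by
  calc (1:ℝ) = (2:ℝ)^(0:ℤ) := by norm_num
    _ ≤ (2:ℝ)^(m-1) := zpow_le_zpow_right₀ (by norm_num) (by omega)

/-- Key inequality (A): the lower admissibility bound of a child is at most
that of its parent.  `tP` parent center, `tP + δ` child center, `|δ| = 2^(m-1)`. -/
lemma lowA (m : ℤ) (tP δ : ℝ) (hδ : |δ| = (2:ℝ)^(m-1)) :
    lowF (tP + δ) ((2:ℝ)^(m-1)) ≤ lowF tP ((2:ℝ)^m) := by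
  set r : ℝ := (2:ℝ)^(m-1) with hrdef
  have hr : 0 < r := two_zpow_pos _
  have h2m : (2:ℝ)^m = r * 2 := zpow_succ_real m
  have hδle : δ ≤ r := (abs_le.mp hδ.le).2
  rcases lt_trichotomy m 0 with hm | hm | hm
  · have hrq : r ≤ 1/4 := r_small m hm
    rw [lowF, if_pos (by linarith : r < 1), lowF, h2m, if_pos (by linarith : r*2 < 1),
      Real.exp_add]
    have he : Real.exp δ ≤ 2 := exp_le_two_of_le δ (by linarith)
    nlinarith [Real.exp_pos tP, Real.exp_pos (2:ℝ), Real.exp_pos δ,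
      mul_nonneg (mul_nonneg (Real.exp_pos (2:ℝ)).le (Real.exp_pos tP).le) hr.le]
  · subst hm
    have hr2 : r = 1/2 := by norm_num [hrdef]
    rw [lowF, if_pos (by rw [hr2]; norm_num : r < 1), lowF, h2m,
      if_neg (by rw [hr2]; norm_num : ¬ (r*2 < 1)), Real.exp_add, hr2]
    have he : Real.exp δ ≤ 2 := exp_le_two_of_le δ (by rw [hr2] at hδle; linarith)
    have harg : (2:ℝ) * (1/2*2) = 2 := by norm_num
    rw [harg]
    nlinarith [Real.exp_pos tP, Real.exp_pos (2:ℝ), Real.exp_pos δ,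
      mul_nonneg (Real.exp_pos tP).le (Real.exp_pos (2:ℝ)).le]
  · have hrb : (1:ℝ) ≤ r := r_big m hm
    rw [lowF, if_neg (by linarith : ¬ (r < 1)), lowF, h2m,
      if_neg (by linarith : ¬ (r*2 < 1)), ← Real.exp_add, ← Real.exp_add]
    exact Real.exp_le_exp.mpr (by linarith)

/-- Key inequality (C): `4 ·` lower bound of parent `≤` upper bound of child. -/
lemma highC (m : ℤ) (tP δ : ℝ) (hδ : |δ| = (2:ℝ)^(m-1)) :
    4 * lowF tP ((2:ℝ)^m) ≤ highF (tP + δ) ((2:ℝ)^(m-1)) := by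
  set r : ℝ := (2:ℝ)^(m-1) with hrdef
  have hr : 0 < r := two_zpow_pos _
  have h2m : (2:ℝ)^m = r * 2 := zpow_succ_real m
  have hδge : -r ≤ δ := (abs_le.mp hδ.le).1
  rcases lt_trichotomy m 0 with hm | hm | hm
  · have hrq : r ≤ 1/4 := r_small m hm
    rw [highF, if_pos (by linarith : r < 1), lowF, h2m, if_pos (by linarith : r*2 < 1)]
    have key : (8:ℝ) ≤ Real.exp (6 + δ) := exp_big _ (by linarith)
    have e1 : Real.exp 8 * Real.exp (tP + δ) = Real.exp 2 * Real.exp tP * Real.exp (6 + δ) := by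
      rw [← Real.exp_add, ← Real.exp_add, ← Real.exp_add]; ring_nf
    rw [e1]
    have pos : (0:ℝ) < Real.exp 2 * Real.exp tP * r := by positivity
    nlinarith [mul_le_mul_of_nonneg_right key pos.le]
  · subst hm
    have hr2 : r = 1/2 := by norm_num [hrdef]
    rw [highF, if_pos (by rw [hr2]; norm_num : r < 1), lowF, h2m,
      if_neg (by rw [hr2]; norm_num : ¬ (r*2 < 1)), hr2]
    have harg : (2:ℝ) * (1/2*2) = 2 := by norm_num
    rw [harg]
    have key : (8:ℝ) ≤ Real.exp (6 + δ) := exp_big _ (by rw [hr2] at hδge; linarith)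
    have e1 : Real.exp 8 * Real.exp (tP + δ) = Real.exp tP * Real.exp 2 * Real.exp (6 + δ) := by
      rw [← Real.exp_add, ← Real.exp_add, ← Real.exp_add]; ring_nf
    rw [e1]
    have pos : (0:ℝ) < Real.exp tP * Real.exp 2 := by positivity
    nlinarith [mul_le_mul_of_nonneg_right key pos.le]
  · have hrb : (1:ℝ) ≤ r := r_big m hm
    rw [highF, if_neg (by linarith : ¬ (r < 1)), lowF, h2m,
      if_neg (by linarith : ¬ (r*2 < 1))]
    have key : (8:ℝ) ≤ Real.exp (δ + 4*r) := exp_big _ (by linarith)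
    have e1 : Real.exp (tP + δ) * Real.exp (8*r)
        = Real.exp tP * Real.exp (2*(r*2)) * Real.exp (δ + 4*r) := by
      rw [← Real.exp_add, ← Real.exp_add, ← Real.exp_add]; ring_nf
    rw [e1]
    have pos : (0:ℝ) < Real.exp tP * Real.exp (2*(r*2)) := by positivity
    nlinarith [mul_le_mul_of_nonneg_right key pos.le]

/-- The offset between a child center and its parent center. -/
lemma tc_par (m q : ℤ) : ∃ δ : ℝ, |δ| = (2:ℝ)^(m-1) ∧
    tc m q = tc (m+1) (par m q) + δ := by
  obtain ⟨ρ, hρ, hq⟩ := par_decomp m q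
  have hL : tL (m+1) (par m q) = tL m q - (2:ℝ)^m * ρ := by
    rw [tL_par]; unfold tL
    have hcast : (q:ℝ) = 2 * (par m q : ℝ) + (eps m : ℝ) + (ρ:ℝ) := by exact_mod_cast congrArg Int.cast hq
    rw [hcast]; ring
  refine ⟨(2:ℝ)^(m-1) * (2*ρ - 1), ?_, ?_⟩
  · rcases hρ with h | h <;> subst h <;>
      simp [abs_mul, abs_of_pos (two_zpow_pos (m-1))] <;> norm_num
  · unfold tc
    rw [hL, show m + 1 - 1 = m from by ring]
    have h2m : (2:ℝ)^m = (2:ℝ)^(m-1) * 2 := zpow_succ_real m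
    rw [h2m]; ring

lemma bb_le_aa (m q : ℤ) : bb m q ≤ aa m q := by
  obtain ⟨δ, hδ, htc⟩ := tc_par m q
  unfold aa bb
  apply Int.ceil_le_ceil
  rw [show m + 1 - 1 = m from by ring]
  have h1 : 0 < lowF (tc m q) ((2:ℝ)^(m-1)) := lowF_pos _ _ (two_zpow_pos _)
  have h2 : 0 < lowF (tc (m+1) (par m q)) ((2:ℝ)^m) := lowF_pos _ _ (two_zpow_pos _)
  rw [Real.logb_le_logb (by norm_num) h1 h2]
  rw [htc]
  exact lowA m _ δ hδ

lemma le_zpow_ceil (x : ℝ) (hx : 0 < x) : x ≤ (2:ℝ)^(⌈Real.logb 2 x⌉) := by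
  have h := Real.rpow_logb (by norm_num : (0:ℝ) < 2) (by norm_num) hx
  calc x = (2:ℝ) ^ Real.logb 2 x := h.symm
    _ ≤ (2:ℝ) ^ ((⌈Real.logb 2 x⌉ : ℤ) : ℝ) := by
        apply Real.rpow_le_rpow_of_exponent_le (by norm_num)
        exact_mod_cast Int.le_ceil _
    _ = (2:ℝ)^(⌈Real.logb 2 x⌉) := by
        rw [Real.rpow_intCast]

lemma zpow_ceil_lt (x : ℝ) (hx : 0 < x) : (2:ℝ)^(⌈Real.logb 2 x⌉) < 2 * x := by
  have h := Real.rpow_logb (by norm_num : (0:ℝ) < 2) (by norm_num) hx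
  calc (2:ℝ)^(⌈Real.logb 2 x⌉) = (2:ℝ) ^ ((⌈Real.logb 2 x⌉ : ℤ) : ℝ) := by
        rw [Real.rpow_intCast]
    _ < (2:ℝ) ^ (Real.logb 2 x + 1) := by
        apply Real.rpow_lt_rpow_of_exponent_lt (by norm_num)
        have := Int.ceil_lt_add_one (Real.logb 2 x)
        exact_mod_cast this
    _ = 2 * x := by
        rw [Real.rpow_add (by norm_num), h, Real.rpow_one]; ring

lemma zpow_mono2 {s t : ℤ} (h : s ≤ t) : (2:ℝ)^s ≤ (2:ℝ)^t :=
  zpow_le_zpow_right₀ (by norm_num) h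

/-- Any side exponent `s` between `bb` and `aa` is admissible for the interval. -/
lemma side_admissible (m q s : ℤ) (h1 : bb m q ≤ s) (h2 : s ≤ aa m q) :
    lowF (tc m q) ((2:ℝ)^(m-1)) ≤ 2^s ∧ (2:ℝ)^s < highF (tc m q) ((2:ℝ)^(m-1)) := by
  obtain ⟨δ, hδ, htc⟩ := tc_par m q
  have hlC : 0 < lowF (tc m q) ((2:ℝ)^(m-1)) := lowF_pos _ _ (two_zpow_pos _)
  have hlP : 0 < lowF (tc (m+1) (par m q)) ((2:ℝ)^m) := lowF_pos _ _ (two_zpow_pos _)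
  constructor
  · calc lowF (tc m q) ((2:ℝ)^(m-1)) ≤ (2:ℝ)^(bb m q) := le_zpow_ceil _ hlC
      _ ≤ (2:ℝ)^s := zpow_mono2 h1
  · have hC := highC m (tc (m+1) (par m q)) δ hδ
    rw [← htc] at hC
    have haa : (2:ℝ)^(aa m q) < 2 * lowF (tc (m+1) (par m q)) ((2:ℝ)^m) := by
      unfold aa bb
      rw [show m + 1 - 1 = m from by ring]
      exact zpow_ceil_lt _ hlP
    have := zpow_mono2 h2
    linarith

end CZGrid
namespace CZGrid
open Real

/-! ### Interval indexing -/

noncomputable def qIdx (m : ℤ) (t : ℝ) : ℤ := ⌊t / (2:ℝ)^m - th m⌋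

lemma mem_tI_iff (m q : ℤ) (t : ℝ) : t ∈ tI m q ↔ q = qIdx m t := by
  have h2 : (0:ℝ) < 2^m := two_zpow_pos m
  unfold tI tL qIdx
  rw [Set.mem_Ico]
  constructor
  · rintro ⟨h1, h2'⟩
    symm
    apply Int.floor_eq_iff.mpr
    constructor
    · rw [le_sub_iff_add_le, le_div_iff₀ h2]
      nlinarith
    · rw [sub_lt_iff_lt_add, div_lt_iff₀ h2]
      nlinarith
  · intro hq
    subst hq
    have h1 := Int.floor_le (t / (2:ℝ)^m - th m)
    have h2' := Int.lt_floor_add_one (t / (2:ℝ)^m - th m)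
    constructor
    · rw [← sub_nonneg]
      have : (⌊t / (2:ℝ)^m - th m⌋ : ℝ) + th m ≤ t / 2^m := by linarith
      calc (0:ℝ) ≤ 2^m * (t/2^m - (⌊t / (2:ℝ)^m - th m⌋ + th m)) := by
            apply mul_nonneg h2.le; linarith
        _ = t - 2^m * ((⌊t / (2:ℝ)^m - th m⌋:ℝ) + th m) := by field_simp
    · have : t / 2^m < (⌊t / (2:ℝ)^m - th m⌋ : ℝ) + th m + 1 := by linarith
      calc t = 2^m * (t / 2^m) := by field_simp
        _ < 2^m * ((⌊t / (2:ℝ)^m - th m⌋ : ℝ) + th m + 1) := by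
            apply mul_lt_mul_of_pos_left this h2
        _ = 2^m * ((⌊t / (2:ℝ)^m - th m⌋ : ℝ) + th m) + 2^m := by ring

lemma mem_tI_self (m : ℤ) (t : ℝ) : t ∈ tI m (qIdx m t) := (mem_tI_iff m _ t).mpr rfl

lemma tI_unique {m q q' : ℤ} {t : ℝ} (h : t ∈ tI m q) (h' : t ∈ tI m q') : q = q' := by
  rw [mem_tI_iff] at h h'; omega

lemma qIdx_succ (m : ℤ) (t : ℝ) : qIdx (m+1) t = par m (qIdx m t) := by
  have h1 : t ∈ tI (m+1) (par m (qIdx m t)) := tI_subset_par m _ (mem_tI_self m t)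
  have h2 := (mem_tI_iff (m+1) _ t).mp h1
  omega

/-! ### Cubes and nodes -/

def cube (n : ℕ) (s : ℤ) (v : Fin n → ℤ) : Set (Fin n → ℝ) :=
  {x | ∀ i, (v i : ℝ) * 2^s ≤ x i ∧ x i < ((v i : ℝ) + 1) * 2^s}

noncomputable def vIdx (n : ℕ) (s : ℤ) (y : Fin n → ℝ) : Fin n → ℤ :=
  fun i => ⌊y i / (2:ℝ)^s⌋

lemma mem_cube_iff (n : ℕ) (s : ℤ) (v : Fin n → ℤ) (y : Fin n → ℝ) :
    y ∈ cube n s v ↔ v = vIdx n s y := by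
  have h2 : (0:ℝ) < 2^s := two_zpow_pos s
  unfold cube vIdx
  simp only [Set.mem_setOf_eq]
  constructor
  · intro h
    funext i
    obtain ⟨ha, hb⟩ := h i
    symm
    apply Int.floor_eq_iff.mpr
    constructor
    · rw [le_div_iff₀ h2]; linarith
    · rw [div_lt_iff₀ h2]; linarith
  · intro h i
    rw [h]
    have h1 := Int.floor_le (y i / (2:ℝ)^s)
    have h2' := Int.lt_floor_add_one (y i / (2:ℝ)^s)
    constructor
    · calc (⌊y i / (2:ℝ)^s⌋ : ℝ) * 2^s ≤ (y i / 2^s) * 2^s := by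
            apply mul_le_mul_of_nonneg_right h1 h2.le
        _ = y i := by field_simp
    · calc y i = (y i / 2^s) * 2^s := by field_simp
        _ < ((⌊y i / (2:ℝ)^s⌋ : ℝ) + 1) * 2^s := by
            apply mul_lt_mul_of_pos_right h2' h2

lemma mem_cube_self (n : ℕ) (s : ℤ) (y : Fin n → ℝ) : y ∈ cube n s (vIdx n s y) :=
  (mem_cube_iff n s _ y).mpr rfl

lemma cube_unique {n : ℕ} {s : ℤ} {v v' : Fin n → ℤ} {y : Fin n → ℝ}
    (h : y ∈ cube n s v) (h' : y ∈ cube n s v') : v = v' := by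
  rw [mem_cube_iff] at h h'; rw [h, h']

/-- cube inclusion into the double-sized cube. -/
lemma cube_subset_div2 (n : ℕ) (s : ℤ) (v : Fin n → ℤ) :
    cube n s v ⊆ cube n (s+1) (fun i => (v i) / 2) := by
  intro y hy i
  obtain ⟨h1, h2⟩ := hy i
  have hd := Int.mul_ediv_add_emod (v i) 2
  have hm0 := Int.emod_nonneg (v i) (by norm_num : (2:ℤ) ≠ 0)
  have hm1 := Int.emod_lt_of_pos (v i) (by norm_num : (0:ℤ) < 2)
  have h2s : (2:ℝ)^(s+1) = 2^s * 2 := by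
    rw [← zpow_add_one₀ (by norm_num : (2:ℝ) ≠ 0)]
  have hle : ((v i / 2 : ℤ) : ℝ) * 2 ≤ (v i : ℝ) := by
    have h : (2 * (v i / 2) : ℤ) ≤ v i := by omega
    have h' : ((2 * (v i / 2) : ℤ) : ℝ) ≤ ((v i : ℤ) : ℝ) := by exact_mod_cast h
    push_cast at h'; linarith
  have hge : ((v i : ℝ) + 1) ≤ (((v i / 2 : ℤ) : ℝ) + 1) * 2 := by
    have h : v i + 1 ≤ 2 * (v i / 2) + 2 := by omega
    have h' : ((v i + 1 : ℤ) : ℝ) ≤ ((2 * (v i / 2) + 2 : ℤ) : ℝ) := by exact_mod_cast h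
    push_cast at h'; linarith
  constructor
  · rw [h2s]
    calc ((v i / 2 : ℤ) : ℝ) * (2^s * 2) = (((v i / 2 : ℤ) : ℝ) * 2) * 2^s := by ring
      _ ≤ (v i : ℝ) * 2^s := by
          apply mul_le_mul_of_nonneg_right hle (two_zpow_pos s).le
      _ ≤ y i := h1
  · rw [h2s]
    calc y i < ((v i : ℝ) + 1) * 2^s := h2
      _ ≤ ((((v i / 2 : ℤ) : ℝ) + 1) * 2) * 2^s := by
          apply mul_le_mul_of_nonneg_right hge (two_zpow_pos s).le
      _ = (((v i / 2 : ℤ) : ℝ) + 1) * (2^s * 2) := by ring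

/-! ### Nodes and the grid -/

def node (n : ℕ) (m q s : ℤ) (v : Fin n → ℤ) : Set (Sp n) := (cube n s v) ×ˢ tI m q

def Dgrid (n : ℕ) (j : ℤ) : Set (Set (Sp n)) :=
  {R | ∃ m q v, bb m q ≤ j - m ∧ j - m ≤ aa m q ∧ R = node n m q (j-m) v}

lemma mem_node_iff {n : ℕ} {m q s : ℤ} {v : Fin n → ℤ} {x : Sp n} :
    x ∈ node n m q s v ↔ x.1 ∈ cube n s v ∧ x.2 ∈ tI m q := Set.mem_prod

end CZGrid
namespace CZGrid
open Real

/-! ### The level function -/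

noncomputable def FF (t : ℝ) (m : ℤ) : ℤ := m + bb m (qIdx m t)

lemma FF_lt_succ (t : ℝ) (m : ℤ) : FF t m < FF t (m+1) := by
  unfold FF
  have h := bb_le_aa m (qIdx m t)
  unfold aa at h
  rw [qIdx_succ m t]
  omega

lemma FF_strictMono (t : ℝ) : StrictMono (FF t) :=
  strictMono_int_of_lt_succ (FF_lt_succ t)

lemma t_mem_self (m : ℤ) (t : ℝ) : tL m (qIdx m t) ≤ t ∧ t < tL m (qIdx m t) + 2^m :=
  mem_tI_self m t

lemma tc_close (m : ℤ) (t : ℝ) : |t - tc m (qIdx m t)| ≤ (2:ℝ)^(m-1) := by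
  obtain ⟨h1, h2⟩ := t_mem_self m t
  have h2m : (2:ℝ)^m = (2:ℝ)^(m-1) * 2 := zpow_succ_real m
  unfold tc
  rw [abs_le]
  constructor <;> [skip; skip] <;> rw [h2m] at h2 <;> [linarith; linarith]

lemma log_two_pos : (0:ℝ) < Real.log 2 := Real.log_pos (by norm_num)

lemma FF_ge (t : ℝ) (m : ℤ) (hm : 1 ≤ m) : m + ⌈t / Real.log 2⌉ ≤ FF t m := by
  unfold FF bb
  have hr : (1:ℝ) ≤ (2:ℝ)^(m-1) := r_big m (by omega)
  have hclose := tc_close m t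
  have habs := (abs_le.mp hclose).2
  set T := tc m (qIdx m t) with hT
  have hlow : lowF T ((2:ℝ)^(m-1)) = Real.exp T * Real.exp (2 * (2:ℝ)^(m-1)) := by
    unfold lowF; rw [if_neg (by linarith)]
  have hlogb : Real.logb 2 (lowF T ((2:ℝ)^(m-1))) = (T + 2 * (2:ℝ)^(m-1)) / Real.log 2 := by
    rw [hlow]; unfold Real.logb
    rw [Real.log_mul (Real.exp_pos _).ne' (Real.exp_pos _).ne', Real.log_exp, Real.log_exp]
  have hge : t / Real.log 2 ≤ Real.logb 2 (lowF T ((2:ℝ)^(m-1))) := by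
    rw [hlogb]
    apply div_le_div_of_nonneg_right ?_ log_two_pos.le |>.trans_eq rfl
    · linarith
  have := Int.ceil_le_ceil hge
  omega

lemma FF_le (t : ℝ) (m : ℤ) (hm : m ≤ 0) : FF t m ≤ 2*m + ⌈(3 + t) / Real.log 2⌉ := by
  unfold FF bb
  have hr : (2:ℝ)^(m-1) ≤ 1/2 := by
    calc (2:ℝ)^(m-1) ≤ (2:ℝ)^(-1:ℤ) := zpow_le_zpow_right₀ (by norm_num) (by omega)
      _ = 1/2 := by norm_num
  have hrpos : (0:ℝ) < (2:ℝ)^(m-1) := two_zpow_pos _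
  have hclose := tc_close m t
  have habs := (abs_le.mp hclose).1
  set T := tc m (qIdx m t) with hT
  have hlow : lowF T ((2:ℝ)^(m-1)) = Real.exp 2 * Real.exp T * (2:ℝ)^(m-1) := by
    unfold lowF; rw [if_pos (by linarith)]
  have hlogb : Real.logb 2 (lowF T ((2:ℝ)^(m-1)))
      = (2 + T) / Real.log 2 + (m - 1) := by
    rw [hlow]; unfold Real.logb
    rw [Real.log_mul (by positivity) hrpos.ne', Real.log_mul (Real.exp_pos _).ne' (Real.exp_pos _).ne',
      Real.log_exp, Real.log_exp, Real.log_zpow]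
    push_cast
    field_simp
  have hle : Real.logb 2 (lowF T ((2:ℝ)^(m-1))) ≤ (3 + t) / Real.log 2 + ((m - 1 : ℤ) : ℝ) := by
    rw [hlogb]
    have : (2 + T) / Real.log 2 ≤ (3 + t) / Real.log 2 := by
      apply div_le_div_of_nonneg_right ?_ log_two_pos.le |>.trans_eq rfl
      linarith
    push_cast
    linarith
  have h1 := Int.ceil_le_ceil hle
  rw [Int.ceil_add_intCast] at h1
  omega

/-- membership conditions as an `FF` window. -/
lemma cond_iff_FF (t : ℝ) (j m : ℤ) :
    (bb m (qIdx m t) ≤ j - m ∧ j - m ≤ aa m (qIdx m t)) ↔ (FF t m ≤ j ∧ j < FF t (m+1)) := by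
  unfold FF aa
  rw [qIdx_succ m t]
  omega

lemma exists_level (t : ℝ) (j : ℤ) : ∃ m, FF t m ≤ j ∧ j < FF t (m+1) := by
  have hBdd : ∃ b : ℤ, ∀ z : ℤ, FF t z ≤ j → z ≤ b := by
    refine ⟨max 0 (j - ⌈t / Real.log 2⌉), fun z hz => ?_⟩
    rcases le_or_gt z 0 with h | h
    · exact h.trans (le_max_left _ _)
    · have := FF_ge t z (by omega)
      have : z ≤ j - ⌈t / Real.log 2⌉ := by omega
      exact this.trans (le_max_right _ _)
  have hInh : ∃ z : ℤ, FF t z ≤ j := by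
    refine ⟨min 0 (j - ⌈(3 + t) / Real.log 2⌉), ?_⟩
    have h0 : min 0 (j - ⌈(3 + t) / Real.log 2⌉) ≤ 0 := min_le_left _ _
    have h1 : min 0 (j - ⌈(3 + t) / Real.log 2⌉) ≤ j - ⌈(3 + t) / Real.log 2⌉ := min_le_right _ _
    have := FF_le t _ h0
    omega
  obtain ⟨m, hm, hub⟩ := Int.exists_greatest_of_bdd hBdd hInh
  refine ⟨m, hm, ?_⟩
  by_contra h
  push_neg at h
  have := hub (m+1) h
  omega

lemma level_unique (t : ℝ) (j : ℤ) {m m' : ℤ}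
    (h : FF t m ≤ j ∧ j < FF t (m+1)) (h' : FF t m' ≤ j ∧ j < FF t (m'+1)) : m = m' := by
  by_contra hne
  rcases lt_or_gt_of_ne hne with hlt | hlt
  · have : FF t (m+1) ≤ FF t m' := (FF_strictMono t).monotone (by omega)
    omega
  · have : FF t (m'+1) ≤ FF t m := (FF_strictMono t).monotone (by omega)
    omega

end CZGrid
namespace CZGrid
open Real MeasureTheory

/-! ### Nodes are CZ sets -/

lemma node_nonempty (n : ℕ) (m q s : ℤ) (v : Fin n → ℤ) : (node n m q s v).Nonempty := by
  refine ⟨((fun i => (v i : ℝ) * 2^s), tL m q), mem_node_iff.mpr ⟨?_, ?_⟩⟩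
  · intro i
    have := two_zpow_pos s
    dsimp only
    exact ⟨le_refl _, by nlinarith⟩
  · dsimp only
    refine ⟨le_refl _, ?_⟩
    have := two_zpow_pos m
    linarith

lemma tI_eq_Ico (m q : ℤ) :
    tI m q = Set.Ico (tc m q - (2:ℝ)^(m-1)) (tc m q + (2:ℝ)^(m-1)) := by
  have h2m : (2:ℝ)^m = (2:ℝ)^(m-1) * 2 := zpow_succ_real m
  have e1 : tc m q - (2:ℝ)^(m-1) = tL m q := by unfold tc; ring
  have e2 : tc m q + (2:ℝ)^(m-1) = tL m q + 2^m := by unfold tc; rw [h2m]; ring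
  rw [e1, e2]
  rfl

lemma node_isCZ (n : ℕ) (m q s : ℤ) (v : Fin n → ℤ)
    (h1 : bb m q ≤ s) (h2 : s ≤ aa m q) : IsCZSet n (node n m q s v) := by
  obtain ⟨hlow, hhigh⟩ := side_admissible m q s h1 h2
  refine ⟨cube n s v, (2:ℝ)^s, fun i => ((v i : ℝ) + 1/2) * 2^s, tc m q, (2:ℝ)^(m-1),
    ⟨⟨s, v, rfl, rfl, rfl⟩, two_zpow_pos _, ?_, ?_⟩, ?_⟩
  · intro hr
    unfold lowF at hlow
    unfold highF at hhigh
    rw [if_pos hr] at hlow hhigh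
    exact ⟨hlow, hhigh⟩
  · intro hr
    unfold lowF at hlow
    unfold highF at hhigh
    rw [if_neg (not_lt.mpr hr)] at hlow hhigh
    exact ⟨hlow, hhigh⟩
  · unfold czSet node
    rw [tI_eq_Ico]

/-! ### Volume of nodes -/

lemma cube_eq_pi (n : ℕ) (s : ℤ) (v : Fin n → ℤ) :
    cube n s v = Set.pi Set.univ (fun i => Set.Ico ((v i : ℝ) * 2^s) (((v i : ℝ) + 1) * 2^s)) := by
  ext y
  simp [cube, Set.mem_pi, Set.mem_Ico]

lemma volume_node (n : ℕ) (m q s : ℤ) (v : Fin n → ℤ) :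
    volume (node n m q s v)
      = (ENNReal.ofReal ((2:ℝ)^s))^n * ENNReal.ofReal ((2:ℝ)^m) := by
  unfold node
  rw [MeasureTheory.Measure.volume_eq_prod, MeasureTheory.Measure.prod_prod]
  congr 1
  · rw [cube_eq_pi, MeasureTheory.volume_pi_pi]
    have : ∀ i : Fin n, volume (Set.Ico ((v i : ℝ) * 2^s) (((v i : ℝ) + 1) * 2^s))
        = ENNReal.ofReal ((2:ℝ)^s) := by
      intro i
      rw [Real.volume_Ico]
      congr 1
      ring
    rw [Finset.prod_congr rfl (fun i _ => this i), Finset.prod_const, Finset.card_univ,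
      Fintype.card_fin]
  · unfold tI
    rw [Real.volume_Ico]
    congr 1
    ring

lemma ofReal_zpow_ne_zero (s : ℤ) : ENNReal.ofReal ((2:ℝ)^s) ≠ 0 := by
  simp [ENNReal.ofReal_eq_zero, not_le, two_zpow_pos s]

lemma ofReal_zpow_ne_top (s : ℤ) : ENNReal.ofReal ((2:ℝ)^s) ≠ ⊤ := ENNReal.ofReal_ne_top

lemma volume_node_ne_zero (n : ℕ) (m q s : ℤ) (v : Fin n → ℤ) :
    volume (node n m q s v) ≠ 0 := by
  rw [volume_node]
  exact mul_ne_zero (pow_ne_zero n (ofReal_zpow_ne_zero s)) (ofReal_zpow_ne_zero m)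

lemma volume_node_ne_top (n : ℕ) (m q s : ℤ) (v : Fin n → ℤ) :
    volume (node n m q s v) ≠ ⊤ :=
  (volume_node n m q s v) ▸ ENNReal.mul_ne_top (ENNReal.pow_ne_top (ofReal_zpow_ne_top s))
    (ofReal_zpow_ne_top m)

lemma ofReal_zpow_succ (s : ℤ) :
    ENNReal.ofReal ((2:ℝ)^(s+1)) = 2 * ENNReal.ofReal ((2:ℝ)^s) := by
  have : (2:ℝ)^(s+1) = 2 * (2:ℝ)^s := by
    rw [zpow_add_one₀ (by norm_num : (2:ℝ) ≠ 0)]; ring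
  rw [this, ENNReal.ofReal_mul (by norm_num)]
  congr 1
  norm_num

lemma volume_node_succ_space (n : ℕ) (m q s : ℤ) (v w : Fin n → ℤ) :
    volume (node n m q (s+1) v) = 2^n * volume (node n m q s w) := by
  rw [volume_node, volume_node, ofReal_zpow_succ, mul_pow]
  ring

lemma volume_node_succ_time (n : ℕ) (m q q' s : ℤ) (v w : Fin n → ℤ) :
    volume (node n (m+1) q s v) = 2 * volume (node n m q' s w) := by
  rw [volume_node, volume_node, ofReal_zpow_succ]
  ring

/-! ### Uniqueness of the node containing a point -/

lemma eq_of_mem {n : ℕ} {j : ℤ} {R R' : Set (Sp n)} (hR : R ∈ Dgrid n j)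
    (hR' : R' ∈ Dgrid n j) {x : Sp n} (hx : x ∈ R) (hx' : x ∈ R') : R = R' := by
  obtain ⟨m, q, v, h1, h2, rfl⟩ := hR
  obtain ⟨m', q', v', h1', h2', rfl⟩ := hR'
  obtain ⟨hxc, hxt⟩ := mem_node_iff.mp hx
  obtain ⟨hxc', hxt'⟩ := mem_node_iff.mp hx'
  have hq : q = qIdx m x.2 := (mem_tI_iff _ _ _).mp hxt
  have hq' : q' = qIdx m' x.2 := (mem_tI_iff _ _ _).mp hxt'
  have hm : m = m' := by
    apply level_unique x.2 j (m := m) (m' := m')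
    · rw [← cond_iff_FF]
      exact ⟨hq ▸ h1, hq ▸ h2⟩
    · rw [← cond_iff_FF]
      exact ⟨hq' ▸ h1', hq' ▸ h2'⟩
  subst hm
  have hqq : q = q' := by rw [hq, hq']
  subst hqq
  have hv : v = v' := cube_unique hxc hxc'
  subst hv
  rfl

/-! ### Covering -/

lemma Dgrid_cover (n : ℕ) (j : ℤ) : ⋃₀ Dgrid n j = Set.univ := by
  apply Set.eq_univ_of_forall
  intro x
  obtain ⟨m, hm1, hm2⟩ := exists_level x.2 j
  have hcond := (cond_iff_FF x.2 j m).mpr ⟨hm1, hm2⟩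
  refine ⟨node n m (qIdx m x.2) (j - m) (vIdx n (j-m) x.1), ⟨m, _, _, hcond.1, hcond.2, rfl⟩, ?_⟩
  exact mem_node_iff.mpr ⟨mem_cube_self n (j-m) x.1, mem_tI_self m x.2⟩

/-! ### The parent lemma -/

lemma exists_parent {n : ℕ} {j : ℤ} {R : Set (Sp n)} (hR : R ∈ Dgrid n j) :
    ∃ R' ∈ Dgrid n (j+1), R ⊆ R' ∧
      (volume R' = 2^n * volume R ∨ volume R' = 2 * volume R) := by
  obtain ⟨m, q, v, h1, h2, rfl⟩ := hR
  rcases lt_or_eq_of_le h2 with hlt | heq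
  · -- spatial parent
    refine ⟨node n m q (j - m + 1) (fun i => v i / 2), ⟨m, q, _, by omega,
      by rw [show j + 1 - m = j - m + 1 from by ring]; omega,
      by rw [show j + 1 - m = j - m + 1 from by ring]⟩, ?_, ?_⟩
    · unfold node
      exact Set.prod_mono (cube_subset_div2 n (j-m) v) (le_refl _)
    · left
      exact volume_node_succ_space n m q (j-m) _ v
  · -- time parent
    refine ⟨node n (m+1) (par m q) (j - m) v, ⟨m+1, par m q, v, ?_, ?_, ?_⟩, ?_, ?_⟩
    · rw [show j + 1 - (m+1) = j - m from by ring]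
      rw [heq]
      rfl
    · rw [show j + 1 - (m+1) = j - m from by ring, heq]
      unfold aa at *
      exact bb_le_aa (m+1) (par m q)
    · rw [show j + 1 - (m+1) = j - m from by ring]
    · unfold node
      exact Set.prod_mono (le_refl _) (tI_subset_par m q)
    · right
      exact volume_node_succ_time n m (par m q) q (j-m) v v

end CZGrid
namespace CZGrid
open Real MeasureTheory

/-! ### Splitting a node -/

def chVec (n : ℕ) (v : Fin n → ℤ) (δ : Fin n → Fin 2) : Fin n → ℤ :=
  fun i => 2 * v i + ((δ i : ℕ) : ℤ)

lemma chVec_inj (n : ℕ) (v : Fin n → ℤ) {δ δ' : Fin n → Fin 2}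
    (h : chVec n v δ = chVec n v δ') : δ = δ' := by
  funext i
  have := congrFun h i
  unfold chVec at this
  have h2 : ((δ i : ℕ) : ℤ) = ((δ' i : ℕ) : ℤ) := by omega
  have h3 : (δ i : ℕ) = (δ' i : ℕ) := by exact_mod_cast h2
  exact Fin.ext h3

lemma cube_split (n : ℕ) (s : ℤ) (v : Fin n → ℤ) :
    cube n s v = ⋃ δ : Fin n → Fin 2, cube n (s-1) (chVec n v δ) := by
  have h2s : (2:ℝ)^s = (2:ℝ)^(s-1) * 2 := zpow_succ_real s
  have hpos : (0:ℝ) < (2:ℝ)^(s-1) := two_zpow_pos _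
  ext y
  simp only [Set.mem_iUnion]
  constructor
  · intro hy
    set w := vIdx n (s-1) y with hw
    have hyw : y ∈ cube n (s-1) w := mem_cube_self n (s-1) y
    have hrange : ∀ i, w i = 2 * v i ∨ w i = 2 * v i + 1 := by
      intro i
      obtain ⟨ha1, ha2⟩ := hy i
      obtain ⟨hb1, hb2⟩ := hyw i
      have k1 : ((w i : ℝ)) < 2 * v i + 2 := by
        have : (w i : ℝ) * 2^(s-1) < ((v i : ℝ) + 1) * ((2:ℝ)^(s-1) * 2) := by
          rw [← h2s]; exact lt_of_le_of_lt hb1 ha2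
        nlinarith
      have k2 : (2 * (v i : ℝ)) < w i + 1 := by
        have : ((v i : ℝ)) * ((2:ℝ)^(s-1) * 2) ≤ y i := by rw [← h2s]; exact ha1
        nlinarith
      have k1' : w i < 2 * v i + 2 := by exact_mod_cast (by push_cast at k1 ⊢; exact k1 : ((w i : ℝ)) < ((2 * v i + 2 : ℤ) : ℝ))
      have k2' : 2 * v i < w i + 1 := by exact_mod_cast (by push_cast at k2 ⊢; exact k2 : (((2 * v i : ℤ)) : ℝ) < ((w i + 1 : ℤ) : ℝ))
      omega
    refine ⟨fun i => if w i = 2 * v i then 0 else 1, ?_⟩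
    have : chVec n v (fun i => if w i = 2 * v i then 0 else 1) = w := by
      funext i
      unfold chVec
      dsimp only
      rcases hrange i with h | h
      · rw [if_pos h, h]; simp
      · rw [if_neg (by omega : ¬ w i = 2 * v i), h]; simp
    rw [mem_cube_iff]
    rw [this, hw]
  · rintro ⟨δ, hδ⟩
    intro i
    obtain ⟨h1, h2⟩ := hδ i
    unfold chVec at h1 h2
    push_cast at h1 h2
    have hd0 : (0:ℝ) ≤ ((δ i : ℕ) : ℝ) := by positivity
    have hd1 : ((δ i : ℕ) : ℝ) ≤ 1 := by
      have h : (δ i : ℕ) ≤ 1 := by omega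
      exact_mod_cast h
    constructor
    · rw [h2s]
      push_cast
      nlinarith
    · rw [h2s]
      push_cast
      nlinarith

lemma par_child (m q ρ : ℤ) (hρ : ρ = 0 ∨ ρ = 1) : par (m-1) (2*q + eps (m-1) + ρ) = q := by
  unfold par
  omega

lemma tI_split (m q : ℤ) :
    tI m q = tI (m-1) (2*q + eps (m-1)) ∪ tI (m-1) (2*q + eps (m-1) + 1) := by
  apply Set.Subset.antisymm
  · intro t ht
    set q' := qIdx (m-1) t with hq'
    have h1 : t ∈ tI (m-1) q' := mem_tI_self (m-1) t
    have h2 : qIdx m t = par (m-1) q' := by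
      have := qIdx_succ (m-1) t
      rw [show m - 1 + 1 = m from by ring] at this
      exact this
    have h3 : q = qIdx m t := (mem_tI_iff _ _ _).mp ht
    obtain ⟨ρ, hρ, hdec⟩ := par_decomp (m-1) q'
    rcases hρ with h | h
    · left
      have : q' = 2*q + eps (m-1) := by omega
      rwa [← this]
    · right
      have : q' = 2*q + eps (m-1) + 1 := by omega
      rwa [← this]
  · apply Set.union_subset
    · have h := tI_subset_par (m-1) (2*q + eps (m-1))
      rw [show m - 1 + 1 = m from by ring] at h
      have hp : par (m-1) (2*q + eps (m-1)) = q := by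
        have := par_child m q 0 (Or.inl rfl)
        rwa [add_zero] at this
      rwa [hp] at h
    · have h := tI_subset_par (m-1) (2*q + eps (m-1) + 1)
      rw [show m - 1 + 1 = m from by ring] at h
      have hp : par (m-1) (2*q + eps (m-1) + 1) = q := par_child m q 1 (Or.inr rfl)
      rwa [hp] at h

end CZGrid
namespace CZGrid
open Real MeasureTheory

/-! ### Disjointness of nodes from distinct data -/

lemma node_disj_cube {n : ℕ} {m q s : ℤ} {v v' : Fin n → ℤ} (h : v ≠ v') :
    Disjoint (node n m q s v) (node n m q s v') := by
  rw [Set.disjoint_left]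
  intro x hx hx'
  exact h (cube_unique (mem_node_iff.mp hx).1 (mem_node_iff.mp hx').1)

lemma node_disj_tI {n : ℕ} {m q q' s : ℤ} {v v' : Fin n → ℤ} (h : q ≠ q') :
    Disjoint (node n m q s v) (node n m q' s v') := by
  rw [Set.disjoint_left]
  intro x hx hx'
  exact h (tI_unique (mem_node_iff.mp hx).2 (mem_node_iff.mp hx').2)

/-! ### The splitting lemma -/

lemma exists_split {n : ℕ} {j : ℤ} {R : Set (Sp n)} (hR : R ∈ Dgrid n j) :
    ∃ k : ℕ, (k = 2 ∨ k = 2^n) ∧ ∃ Rs : Fin k → Set (Sp n),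
      (∀ i, Rs i ∈ Dgrid n (j-1)) ∧ Pairwise (Function.onFun Disjoint Rs) ∧
      R = ⋃ i, Rs i ∧
      ∀ i, volume R = 2 * volume (Rs i) ∨ volume R = 2^n * volume (Rs i) := by
  obtain ⟨m, q, v, h1, h2, rfl⟩ := hR
  set s := j - m with hs
  rcases lt_or_eq_of_le h1 with hlt | heq
  · -- spatial split into 2^n pieces
    set e := (finFunctionFinEquiv : (Fin n → Fin 2) ≃ Fin (2^n)) with he
    refine ⟨2^n, Or.inr rfl, fun i => node n m q (s-1) (chVec n v (e.symm i)), ?_, ?_, ?_, ?_⟩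
    · intro i
      exact ⟨m, q, chVec n v (e.symm i), by omega, by omega, by rw [show j - 1 - m = s - 1 from by omega]⟩
    · intro i i' hne
      apply node_disj_cube
      intro hc
      exact hne (e.symm.injective (chVec_inj n v hc))
    · unfold node
      rw [cube_split n s v, Set.iUnion_prod_const]
      ext x
      simp only [Set.mem_iUnion]
      constructor
      · rintro ⟨δ, hδ⟩
        exact ⟨e δ, by rwa [Equiv.symm_apply_apply]⟩
      · rintro ⟨i, hi⟩
        exact ⟨e.symm i, hi⟩
    · intro i
      right
      have h := volume_node_succ_space n m q (s-1) v (chVec n v (e.symm i))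
      rw [show s - 1 + 1 = s from by ring] at h
      exact h
  · -- time split into 2 pieces
    refine ⟨2, Or.inl rfl, fun i => node n (m-1) (2*q + eps (m-1) + (i : ℕ)) s v, ?_, ?_, ?_, ?_⟩
    · intro i
      have hpc : par (m-1) (2*q + eps (m-1) + (i : ℕ)) = q := by
        apply par_child
        omega
      have haa : aa (m-1) (2*q + eps (m-1) + (i : ℕ)) = bb m q := by
        unfold aa
        rw [show m - 1 + 1 = m from by ring, hpc]
      refine ⟨m-1, 2*q + eps (m-1) + (i : ℕ), v, ?_, ?_, ?_⟩
      · rw [show j - 1 - (m-1) = s from by omega]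
        exact (bb_le_aa _ _).trans (haa.trans heq).le
      · rw [show j - 1 - (m-1) = s from by omega]
        exact (haa.trans heq).ge
      · rw [show j - 1 - (m-1) = s from by omega]
    · intro i i' hne
      apply node_disj_tI
      have : (i : ℕ) ≠ (i' : ℕ) := fun h => hne (Fin.ext h)
      omega
    · unfold node
      rw [tI_split m q, Set.prod_union]
      ext x
      simp only [Set.mem_iUnion, Set.mem_union, Fin.exists_fin_two]
      norm_num
    · intro i
      left
      have := volume_node_succ_time n (m-1) q (2*q + eps (m-1) + (i : ℕ)) s v v
      rw [show m - 1 + 1 = m from by ring] at this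
      exact this

end CZGrid
namespace CZGrid
open Real MeasureTheory Filter

/-! ### ENNReal helpers -/

lemma two_le_pow_ennreal {n : ℕ} (hn : 1 ≤ n) : (2:ℝ≥0∞) ≤ 2^n := by
  calc (2:ℝ≥0∞) = 2^1 := (pow_one 2).symm
    _ ≤ 2^n := pow_le_pow_right₀ one_le_two hn

lemma one_le_twothirds_two : (1:ℝ≥0∞) ≤ 2/3*2 := by
  have h : (2:ℝ≥0∞)/3*2 = 2*2/3 := by rw [mul_comm, mul_div_assoc]
  rw [h, ENNReal.le_div_iff_mul_le (Or.inl (by norm_num)) (Or.inl (by norm_num))]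
  norm_num

lemma le_twothirds {p c : ℝ≥0∞} (hc : 2 ≤ c) : p ≤ 2/3 * (c * p) := by
  calc p = 1 * p := (one_mul p).symm
    _ ≤ (2/3*2) * p := mul_le_mul_left one_le_twothirds_two p
    _ ≤ (2/3*c) * p := mul_le_mul_left (mul_le_mul_right hc _) p
    _ = 2/3 * (c*p) := mul_assoc _ _ _

lemma vol_mem {n : ℕ} {j : ℤ} {R : Set (Sp n)} (hR : R ∈ Dgrid n j) :
    volume R ≠ 0 ∧ volume R ≠ ⊤ := by
  obtain ⟨m, q, v, _, _, rfl⟩ := hR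
  exact ⟨volume_node_ne_zero n m q _ v, volume_node_ne_top n m q _ v⟩

lemma iSup_two_pow_mul {v : ℝ≥0∞} (hv : v ≠ 0) : (⨆ k : ℕ, (2:ℝ≥0∞)^k * v) = ⊤ := by
  rw [← ENNReal.iSup_mul]
  rw [show (⨆ k : ℕ, (2:ℝ≥0∞)^k) = ⊤ from ?_]
  · exact ENNReal.top_mul hv
  · rw [eq_top_iff, ← ENNReal.iSup_natCast]
    exact iSup_mono fun k => by
      calc (k : ℝ≥0∞) ≤ ((2^k : ℕ) : ℝ≥0∞) := by exact_mod_cast k.lt_two_pow_self.le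
        _ = 2^k := by push_cast; ring

/-! ### Nesting -/

lemma nest_aux {n : ℕ} : ∀ (d : ℕ) (l : ℤ) (R : Set (Sp n)), R ∈ Dgrid n l →
    ∀ R' ∈ Dgrid n (l + d), R ⊆ R' ∨ R ∩ R' = ∅ := by
  intro d
  induction d with
  | zero =>
    intro l R hR R' hR'
    rw [show l + ((0:ℕ):ℤ) = l from by push_cast; ring] at hR'
    rcases Set.eq_empty_or_nonempty (R ∩ R') with h | h
    · exact Or.inr h
    · obtain ⟨x, hx, hx'⟩ := h
      exact Or.inl (le_of_eq (eq_of_mem hR hR' hx hx'))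
  | succ d ih =>
    intro l R hR R' hR'
    obtain ⟨P, hP, hsub, _⟩ := exists_parent hR
    have hR'' : R' ∈ Dgrid n ((l + 1) + d) := by
      rw [show (l + 1) + (d:ℤ) = l + ((d:ℕ)+1:ℕ) from by push_cast; ring]
      exact hR'
    rcases ih (l+1) P hP R' hR'' with h | h
    · exact Or.inl (hsub.trans h)
    · refine Or.inr (Set.eq_empty_of_subset_empty ?_)
      rw [← h]
      exact Set.inter_subset_inter_left R' hsub

end CZGrid

/-- Theorem 3.1. There exists a collection `{𝒟_j}_{j ∈ ℤ}` of partitions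
of `S` into pairwise disjoint Calderón–Zygmund sets satisfying properties (i)–(v):
(i) `S = ⋃_{R ∈ 𝒟_j} R`; (ii) nesting; (iii) unique parent in `𝒟_{j+1}` of comparable
measure; (iv) splitting into `2` or `2ⁿ` pieces of `𝒟_{j−1}` of comparable measure;
(v) `ρ(R_j^x) → 0` as `j → −∞` and `ρ(R_j^x) → ∞` as `j → +∞`. -/
theorem exists_dyadicGrid (n : ℕ) (hn : 1 ≤ n) :
    ∃ D : ℤ → Set (Set (Sp n)), IsDyadicGrid n D := by
  classical
  refine ⟨CZGrid.Dgrid n, ?_, ?_, ?_, ?_, ?_, ?_, ?_, ?_⟩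
  · -- (0) CZ sets
    rintro j R ⟨m, q, v, h1, h2, rfl⟩
    exact CZGrid.node_isCZ n m q _ v h1 h2
  · -- (pairwise disjoint)
    intro j R hR R' hR' hne
    exact Set.disjoint_left.mpr fun x hx hx' => hne (CZGrid.eq_of_mem hR hR' hx hx')
  · -- (i) covering
    exact CZGrid.Dgrid_cover n
  · -- (ii) nesting
    intro l k hlk R hR R' hR'
    have hk : k = l + ((k - l).toNat : ℤ) := by omega
    exact CZGrid.nest_aux (k - l).toNat l R hR R' (hk ▸ hR')
  · -- (iii) unique parent
    intro j R hR
    obtain ⟨P, hP, hsub, _⟩ := CZGrid.exists_parent hR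
    refine ⟨P, ⟨hP, hsub⟩, ?_⟩
    rintro R' ⟨hR', hsub'⟩
    obtain ⟨m, q, v, _, _, rfl⟩ := hR
    obtain ⟨x, hx⟩ := CZGrid.node_nonempty n m q _ v
    exact CZGrid.eq_of_mem hR' hP (hsub' hx) (hsub hx)
  · -- (iii) volume bound
    intro j R hR R' hR' hsub'
    obtain ⟨P, hP, hsub, hvol⟩ := CZGrid.exists_parent hR
    obtain ⟨m, q, v, hb1, hb2, rfl⟩ := hR
    obtain ⟨x, hx⟩ := CZGrid.node_nonempty n m q _ v
    have hPR : R' = P := CZGrid.eq_of_mem hR' hP (hsub' hx) (hsub hx)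
    rw [hPR]
    rcases hvol with h | h
    · exact le_of_eq h
    · rw [h]
      exact mul_le_mul_left (CZGrid.two_le_pow_ennreal hn) _
  · -- (iv) splitting
    intro j R hR
    obtain ⟨k, hk, Rs, hmem, hdisj, hunion, hvol⟩ := CZGrid.exists_split hR
    refine ⟨k, hk, Rs, hmem, hdisj, hunion, fun i => ?_⟩
    have hp := CZGrid.vol_mem (hmem i)
    constructor
    · rw [ENNReal.div_le_iff_le_mul (Or.inl (by positivity))
        (Or.inl (by simp [ENNReal.pow_ne_top]))]
      rcases hvol i with h | h
      · rw [h, mul_comm (volume (Rs i)) _]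
        exact mul_le_mul_left (CZGrid.two_le_pow_ennreal hn) _
      · rw [h, mul_comm]
    · rcases hvol i with h | h
      · rw [h]
        exact CZGrid.le_twothirds (le_refl 2)
      · rw [h]
        exact CZGrid.le_twothirds (CZGrid.two_le_pow_ennreal hn)
  · -- (v) limits
    intro x Rx hRx
    set w : ℤ → ℝ≥0∞ := fun j => volume (Rx j) with hw
    have step : ∀ j : ℤ, 2 * w j ≤ w (j+1) ∧ w (j+1) ≤ 2^n * w j := by
      intro j
      obtain ⟨P, hP, hsub, hvol⟩ := CZGrid.exists_parent (hRx j).1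
      have hPeq : Rx (j+1) = P :=
        CZGrid.eq_of_mem (hRx (j+1)).1 hP (hRx (j+1)).2 (hsub (hRx j).2)
      have h2n := CZGrid.two_le_pow_ennreal hn
      constructor
      · rw [hw]; dsimp only; rw [hPeq]
        rcases hvol with h | h
        · rw [h]
          exact mul_le_mul_left h2n _
        · rw [h]
      · rw [hw]; dsimp only; rw [hPeq]
        rcases hvol with h | h
        · rw [h]
        · rw [h]
          exact mul_le_mul_left h2n _
    have mono : Monotone w := by
      apply monotone_int_of_le_succ
      intro j
      calc w j = 1 * w j := (one_mul _).symm
        _ ≤ 2 * w j := mul_le_mul_left one_le_two _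
        _ ≤ w (j+1) := (step j).1
    have hv0 := CZGrid.vol_mem (hRx 0).1
    constructor
    · -- j → -∞ : volume → 0
      have h := tendsto_atBot_iInf mono
      have hinf : (⨅ j : ℤ, w j) = 0 := by
        by_contra h0
        have shrink : ∀ k : ℕ, (2:ℝ≥0∞)^k * w (-(k:ℤ)) ≤ w 0 := by
          intro k
          induction k with
          | zero => simp
          | succ d ih =>
            have hstep := (step (-(d:ℤ)-1)).1
            have e1 : (-(d:ℤ)-1) + 1 = -(d:ℤ) := by ring
            rw [e1] at hstep
            have e2 : (-( (d+1:ℕ) : ℤ)) = -(d:ℤ)-1 := by push_cast; ring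
            calc (2:ℝ≥0∞)^(d+1) * w (-( (d+1:ℕ) : ℤ))
                = 2^d * (2 * w (-(d:ℤ)-1)) := by rw [e2, pow_succ]; ring
              _ ≤ 2^d * w (-(d:ℤ)) := mul_le_mul_right hstep _
              _ ≤ w 0 := ih
        have hbound : ∀ k : ℕ, (2:ℝ≥0∞)^k * (⨅ j : ℤ, w j) ≤ w 0 := fun k =>
          (mul_le_mul_right (iInf_le _ _) _).trans (shrink k)
        have : (⊤:ℝ≥0∞) ≤ w 0 := by
          rw [← CZGrid.iSup_two_pow_mul h0]
          exact iSup_le hbound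
        exact hv0.2 (top_le_iff.mp this)
      rw [hinf] at h
      exact h
    · -- j → +∞ : volume → ⊤
      have h := tendsto_atTop_iSup mono
      have hsup : (⨆ j : ℤ, w j) = ⊤ := by
        have grow : ∀ k : ℕ, (2:ℝ≥0∞)^k * w 0 ≤ w (k:ℤ) := by
          intro k
          induction k with
          | zero => simp
          | succ d ih =>
            have hstep := (step (d:ℤ)).1
            have e2 : (((d+1:ℕ)) : ℤ) = (d:ℤ)+1 := by push_cast; ring
            calc (2:ℝ≥0∞)^(d+1) * w 0 = 2 * (2^d * w 0) := by rw [pow_succ]; ring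
              _ ≤ 2 * w (d:ℤ) := mul_le_mul_right ih _
              _ ≤ w ((d:ℤ)+1) := hstep
              _ = w ((d+1:ℕ):ℤ) := by rw [e2]
        rw [eq_top_iff, ← CZGrid.iSup_two_pow_mul hv0.1]
        apply iSup_le
        intro k
        exact (grow k).trans (le_iSup _ ((k:ℤ)))
      rw [hsup] at h
      exact h
end

section
/- Let {𝒟_j}_{j∈ℤ} be a dyadic grid on S with 𝒟 = ∪_j 𝒟_j, let f be a locally integrable function on S and let α > 0 be such that Ω_α = {x ∈ S : ℳ_𝒟 f(x) > α} has finite measure. Then Ω_α is a disjoint union of countably many dyadic sets {R_j}_j ⊆ 𝒟 satisfying α < ρ(R_j)⁻¹ ∫_{R_j} |f| dρ ≤ 2ⁿα for all j. -/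
open MeasureTheory Set Filter
open scoped ENNReal NNReal Topology

/-- The average of `|f|` on `R` (auxiliary). -/
private noncomputable def avgE (n : ℕ) (f : Sp n → ℝ) (R : Set (Sp n)) : ℝ≥0∞ :=
  (volume R)⁻¹ * ∫⁻ y in R, ‖f y‖₊ ∂volume

private lemma measurableSet_of_isCZSet {n : ℕ} {R : Set (Sp n)} (h : IsCZSet n R) :
    MeasurableSet R := by
  obtain ⟨Q, L, c, t, r, ⟨⟨k, m, hL, hQ, hc⟩, -⟩, hR⟩ := h
  subst hR
  apply MeasurableSet.prod
  · rw [hQ]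
    have hEq : {x : Fin n → ℝ | ∀ i, (m i : ℝ) * 2 ^ k ≤ x i ∧ x i < ((m i : ℝ) + 1) * 2 ^ k}
        = ⋂ i, ((fun x : Fin n → ℝ => x i) ⁻¹'
            Set.Ico ((m i : ℝ) * 2 ^ k) (((m i : ℝ) + 1) * 2 ^ k)) := by
      ext x; simp [Set.mem_iInter, Set.mem_Ico]
    rw [hEq]
    exact MeasurableSet.iInter fun i => (measurable_pi_apply i) measurableSet_Ico
  · exact measurableSet_Ico

/-- covering lemma. If `f` is locally integrable and
`Ω_α = {ℳ_𝒟 f > α}` has finite measure, then `Ω_α` is a disjoint union of countably many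
dyadic sets `{R_j}_j ⊆ 𝒟` with `α < ρ(R_j)⁻¹ ∫_{R_j} |f| dρ ≤ 2ⁿ α` for all `j`. -/
theorem dyadic_covering_lemma (n : ℕ) (hn : 1 ≤ n)
    (D : ℤ → Set (Set (Sp n))) (hD : IsDyadicGrid n D)
    (f : Sp n → ℝ) (hf : LocallyIntegrable f volume) (α : ℝ) (hα : 0 < α)
    (hfin : volume {x : Sp n | ENNReal.ofReal α < maximalFn n (⋃ j, D j) f x} ≠ ⊤) :
    ∃ 𝒞 : Set (Set (Sp n)), 𝒞.Countable ∧ 𝒞 ⊆ ⋃ j, D j ∧ 𝒞.PairwiseDisjoint id ∧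
      {x : Sp n | ENNReal.ofReal α < maximalFn n (⋃ j, D j) f x} = ⋃₀ 𝒞 ∧
      ∀ R ∈ 𝒞, ENNReal.ofReal α < (volume R)⁻¹ * ∫⁻ y in R, ‖f y‖₊ ∂volume ∧
        (volume R)⁻¹ * ∫⁻ y in R, ‖f y‖₊ ∂volume ≤ 2 ^ n * ENNReal.ofReal α := by
  classical
  obtain ⟨h1, h2, h3, h4, h5, h6, h7, h8⟩ := hD
  set a : ℝ≥0∞ := ENNReal.ofReal α with ha_def
  have ha0 : 0 < a := ENNReal.ofReal_pos.mpr hα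
  set Ω : Set (Sp n) := {x | a < maximalFn n (⋃ j, D j) f x} with hΩ_def
  have hM : ∀ y : Sp n, maximalFn n (⋃ j, D j) f y
      = ⨆ R, ⨆ (_ : R ∈ ⋃ j, D j), ⨆ (_ : y ∈ R), avgE n f R := fun y => rfl
  -- any admissible set is contained in Ω
  have subΩ : ∀ R, R ∈ (⋃ j, D j) → a < avgE n f R → R ⊆ Ω := by
    intro R hR hRa y hyR
    have hle : avgE n f R ≤ maximalFn n (⋃ j, D j) f y := by
      rw [hM y]
      exact le_iSup_of_le R (le_iSup_of_le hR (le_iSup_of_le hyR le_rfl))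
    exact lt_of_lt_of_le hRa hle
  -- sets with large average have positive measure
  have vol_pos : ∀ R : Set (Sp n), a < avgE n f R → 0 < volume R := by
    intro R hR
    rcases eq_or_ne (volume R) 0 with h0 | h0
    · exfalso
      have hres : (volume : Measure (Sp n)).restrict R = 0 := Measure.restrict_eq_zero.mpr h0
      have hz : avgE n f R = 0 := by
        simp only [avgE, hres, lintegral_zero_measure, mul_zero]
      rw [hz] at hR
      exact (not_lt_of_ge (zero_le (a := a))) hR
    · exact pos_iff_ne_zero.mpr h0
  have hmemx : ∀ (x : Sp n) (j : ℤ), ∃ R, R ∈ D j ∧ x ∈ R := by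
    intro x j
    have hx : x ∈ ⋃₀ D j := (h3 j) ▸ Set.mem_univ x
    obtain ⟨R, hR, hxR⟩ := hx
    exact ⟨R, hR, hxR⟩
  -- key step: maximal selected set for each point of Ω
  have key : ∀ x ∈ Ω, ∃ R, R ∈ (⋃ j, D j) ∧ x ∈ R ∧ a < avgE n f R ∧
      avgE n f R ≤ 2 ^ n * a ∧
      ∀ R' ∈ (⋃ j, D j), x ∈ R' → a < avgE n f R' → R' ⊆ R := by
    intro x hx
    choose Rx hRx1 hRx2 using hmemx x
    have huniq : ∀ j, ∀ R ∈ D j, x ∈ R → R = Rx j := by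
      intro j R hR hxR
      by_contra hne
      exact (Set.disjoint_left.mp ((h2 j) hR (hRx1 j) hne) hxR) (hRx2 j)
    have hx' : a < maximalFn n (⋃ j, D j) f x := hx
    rw [hM x] at hx'
    simp only [lt_iSup_iff] at hx'
    obtain ⟨R0, hR0, hxR0, h0⟩ := hx'
    obtain ⟨j0, hj0⟩ := Set.mem_iUnion.mp hR0
    have hR0eq : R0 = Rx j0 := huniq j0 R0 hj0 hxR0
    -- the indices with large average are bounded above
    have htend := (h8 x Rx (fun j => ⟨hRx1 j, hRx2 j⟩)).2
    have hev : ∀ᶠ j in atTop, volume Ω < volume (Rx j) :=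
      htend.eventually (lt_mem_nhds (lt_top_iff_ne_top.mpr hfin))
    obtain ⟨j1, hj1⟩ := eventually_atTop.mp hev
    have hbdd : ∀ j : ℤ, a < avgE n f (Rx j) → j ≤ j1 := by
      intro j hj
      by_contra hlt
      push_neg at hlt
      have hsub : Rx j ⊆ Ω := subΩ _ (Set.mem_iUnion.mpr ⟨j, hRx1 j⟩) hj
      exact absurd (measure_mono hsub) (not_le.mpr (hj1 j hlt.le))
    obtain ⟨jm, hjm, hjmax⟩ :=
      Int.exists_greatest_of_bdd ⟨j1, hbdd⟩ ⟨j0, hR0eq ▸ h0⟩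
    -- maximality
    have hmax : ∀ R' ∈ (⋃ j, D j), x ∈ R' → a < avgE n f R' → R' ⊆ Rx jm := by
      intro R' hR' hxR' havg'
      obtain ⟨k, hk⟩ := Set.mem_iUnion.mp hR'
      have hEq : R' = Rx k := huniq k R' hk hxR'
      have hkle : k ≤ jm := hjmax k (hEq ▸ havg')
      rcases h4 k jm hkle (Rx k) (hRx1 k) (Rx jm) (hRx1 jm) with hss | hdis
      · exact hEq ▸ hss
      · exfalso
        have hz : x ∈ Rx k ∩ Rx jm := ⟨hEq ▸ hxR', hRx2 jm⟩
        rw [hdis] at hz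
        exact hz
    -- volume facts
    have hVpos : 0 < volume (Rx jm) := vol_pos _ hjm
    have hVtop : volume (Rx jm) ≠ ⊤ := by
      have hsub : Rx jm ⊆ Ω := subΩ _ (Set.mem_iUnion.mpr ⟨jm, hRx1 jm⟩) hjm
      exact ne_top_of_le_ne_top hfin (measure_mono hsub)
    -- the parent
    obtain ⟨R', ⟨hR'mem, hsubR'⟩, -⟩ := h5 jm (Rx jm) (hRx1 jm)
    have hxR' : x ∈ R' := hsubR' (hRx2 jm)
    have hR'eq : R' = Rx (jm + 1) := huniq (jm + 1) R' hR'mem hxR'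
    have hnot : ¬ a < avgE n f (Rx (jm + 1)) := by
      intro h
      have := hjmax (jm + 1) h
      omega
    have havg' : avgE n f R' ≤ a := hR'eq ▸ not_lt.mp hnot
    have hvol : volume R' ≤ 2 ^ n * volume (Rx jm) :=
      h6 jm (Rx jm) (hRx1 jm) R' hR'mem hsubR'
    have hV'0 : volume R' ≠ 0 := (lt_of_lt_of_le hVpos (measure_mono hsubR')).ne'
    have hV'top : volume R' ≠ ⊤ :=
      ne_top_of_le_ne_top (ENNReal.mul_ne_top (by simp) hVtop) hvol
    have hIle : (∫⁻ y in Rx jm, ‖f y‖₊ ∂volume) ≤ ∫⁻ y in R', ‖f y‖₊ ∂volume :=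
      lintegral_mono_set hsubR'
    have hI' : (∫⁻ y in R', ‖f y‖₊ ∂volume) ≤ a * volume R' := by
      calc (∫⁻ y in R', ‖f y‖₊ ∂volume)
          = volume R' * ((volume R')⁻¹ * ∫⁻ y in R', ‖f y‖₊ ∂volume) := by
            rw [← mul_assoc, ENNReal.mul_inv_cancel hV'0 hV'top, one_mul]
        _ ≤ volume R' * a := mul_le_mul_right havg' _
        _ = a * volume R' := mul_comm _ _
    have hub : avgE n f (Rx jm) ≤ 2 ^ n * a := by
      calc avgE n f (Rx jm)
          = (volume (Rx jm))⁻¹ * ∫⁻ y in Rx jm, ‖f y‖₊ ∂volume := rfl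
        _ ≤ (volume (Rx jm))⁻¹ * (a * volume R') :=
            mul_le_mul_right (hIle.trans hI') _
        _ ≤ (volume (Rx jm))⁻¹ * (a * (2 ^ n * volume (Rx jm))) :=
            mul_le_mul_right (mul_le_mul_right hvol _) _
        _ = 2 ^ n * a * ((volume (Rx jm))⁻¹ * volume (Rx jm)) := by ring
        _ = 2 ^ n * a := by rw [ENNReal.inv_mul_cancel hVpos.ne' hVtop, mul_one]
    exact ⟨Rx jm, Set.mem_iUnion.mpr ⟨jm, hRx1 jm⟩, hRx2 jm, hjm, hub, hmax⟩
  choose! Rsel hsel1 hsel2 hsel3 hsel4 hsel5 using key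
  refine ⟨Rsel '' Ω, ?_, ?_, ?_, ?_, ?_⟩
  · -- countability
    have hdisj : (Rsel '' Ω).PairwiseDisjoint id := by
      rintro R1 ⟨x, hx, rfl⟩ R2 ⟨y, hy, rfl⟩ hne
      by_contra hnd
      obtain ⟨z, hz1, hz2⟩ := Set.not_disjoint_iff.mp hnd
      have hzΩ : z ∈ Ω := subΩ _ (hsel1 x hx) (hsel3 x hx) hz1
      have e1 : Rsel x = Rsel z := by
        have s1 : Rsel x ⊆ Rsel z := hsel5 z hzΩ _ (hsel1 x hx) hz1 (hsel3 x hx)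
        have s2 : Rsel z ⊆ Rsel x :=
          hsel5 x hx _ (hsel1 z hzΩ) (s1 (hsel2 x hx)) (hsel3 z hzΩ)
        exact Set.Subset.antisymm s1 s2
      have e2 : Rsel y = Rsel z := by
        have s1 : Rsel y ⊆ Rsel z := hsel5 z hzΩ _ (hsel1 y hy) hz2 (hsel3 y hy)
        have s2 : Rsel z ⊆ Rsel y :=
          hsel5 y hy _ (hsel1 z hzΩ) (s1 (hsel2 y hy)) (hsel3 z hzΩ)
        exact Set.Subset.antisymm s1 s2
      exact hne (e1.trans e2.symm)
    have hcnt : Set.Countable {i : ↥(Rsel '' Ω) | 0 < volume (i : Set (Sp n))} := by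
      apply Measure.countable_meas_pos_of_disjoint_of_meas_iUnion_ne_top
        (volume : Measure (Sp n)) (As := fun i : ↥(Rsel '' Ω) => (i : Set (Sp n)))
      · rintro ⟨R, hR⟩
        obtain ⟨x, hx, rfl⟩ := hR
        have hA : Rsel x ∈ ⋃ j, D j := hsel1 x hx
        obtain ⟨j, hj⟩ := Set.mem_iUnion.mp hA
        exact measurableSet_of_isCZSet (h1 j _ hj)
      · intro i j hij
        exact hdisj i.2 j.2 (fun h => hij (Subtype.ext h))
      · rw [← Set.sUnion_eq_iUnion]
        refine ne_top_of_le_ne_top hfin (measure_mono ?_)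
        rintro z ⟨R, ⟨x, hx, rfl⟩, hzR⟩
        exact subΩ _ (hsel1 x hx) (hsel3 x hx) hzR
    have hall : {i : ↥(Rsel '' Ω) | 0 < volume (i : Set (Sp n))} = Set.univ := by
      ext ⟨R, hR⟩
      simp only [Set.mem_setOf_eq, Set.mem_univ, iff_true]
      rcases hR with ⟨x, hx, rfl⟩
      exact vol_pos _ (hsel3 x hx)
    rw [hall] at hcnt
    exact Set.countable_coe_iff.mpr (Set.countable_univ_iff.mp hcnt)
  · rintro R ⟨x, hx, rfl⟩
    exact hsel1 x hx
  · rintro R1 ⟨x, hx, rfl⟩ R2 ⟨y, hy, rfl⟩ hne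
    by_contra hnd
    obtain ⟨z, hz1, hz2⟩ := Set.not_disjoint_iff.mp hnd
    have hzΩ : z ∈ Ω := subΩ _ (hsel1 x hx) (hsel3 x hx) hz1
    have e1 : Rsel x = Rsel z := by
      have s1 : Rsel x ⊆ Rsel z := hsel5 z hzΩ _ (hsel1 x hx) hz1 (hsel3 x hx)
      have s2 : Rsel z ⊆ Rsel x :=
        hsel5 x hx _ (hsel1 z hzΩ) (s1 (hsel2 x hx)) (hsel3 z hzΩ)
      exact Set.Subset.antisymm s1 s2
    have e2 : Rsel y = Rsel z := by
      have s1 : Rsel y ⊆ Rsel z := hsel5 z hzΩ _ (hsel1 y hy) hz2 (hsel3 y hy)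
      have s2 : Rsel z ⊆ Rsel y :=
        hsel5 y hy _ (hsel1 z hzΩ) (s1 (hsel2 y hy)) (hsel3 z hzΩ)
      exact Set.Subset.antisymm s1 s2
    exact hne (e1.trans e2.symm)
  · apply Set.Subset.antisymm
    · intro x hx
      exact Set.mem_sUnion.mpr ⟨Rsel x, ⟨x, hx, rfl⟩, hsel2 x hx⟩
    · rintro z ⟨R, ⟨x, hx, rfl⟩, hzR⟩
      exact subΩ _ (hsel1 x hx) (hsel3 x hx) hzR
  · rintro R ⟨x, hx, rfl⟩
    constructor
    · simpa only [avgE] using hsel3 x hx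
    · simpa only [avgE] using hsel4 x hx
end

section
/- Let {𝒟_j}_{j∈ℤ} be a dyadic grid on S with 𝒟 = ∪_j 𝒟_j. There exists a positive constant K, depending only on n, such that for every locally integrable function f on S, for all positive constants c and b with b < 1, and for every α > 0, one has ρ({x ∈ S : ℳ_𝒟 f(x) > α and f♯_𝒟(x) ≤ cα}) ≤ K·(c/(1−b))·ρ({x ∈ S : ℳ_𝒟 f(x) > bα}). -/
open MeasureTheory Set Filter
open scoped ENNReal NNReal Topology

section Aux
variable {n : ℕ}

lemma czSet_measurable {R : Set (Sp n)} (h : IsCZSet n R) : MeasurableSet R := by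
  obtain ⟨Q, L, c, t, r, ⟨⟨k, m, hL, hQ, hc⟩, hr, _⟩, rfl⟩ := h
  have : Q = Set.pi Set.univ (fun i => Set.Ico ((m i : ℝ) * 2 ^ k) (((m i : ℝ) + 1) * 2 ^ k)) := by
    rw [hQ]; ext x; simp [Set.mem_pi]
  rw [czSet, this]
  exact (MeasurableSet.univ_pi fun i => measurableSet_Ico).prod measurableSet_Ico

lemma czSet_vol {R : Set (Sp n)} (h : IsCZSet n R) :
    0 < volume R ∧ volume R < ⊤ := by
  obtain ⟨Q, L, c, t, r, ⟨⟨k, m, hL, hQ, hc⟩, hr, _⟩, rfl⟩ := h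
  have hQ' : Q = Set.pi Set.univ (fun i => Set.Ico ((m i : ℝ) * 2 ^ k) (((m i : ℝ) + 1) * 2 ^ k)) := by
    rw [hQ]; ext x; simp [Set.mem_pi]
  have hv : volume (czSet n Q t r) = (ENNReal.ofReal ((2:ℝ) ^ k)) ^ n * ENNReal.ofReal (2 * r) := by
    rw [czSet, hQ', Measure.volume_eq_prod, Measure.prod_prod, volume_pi_pi]
    simp only [Real.volume_Ico]
    have h1 : ∀ i : Fin n, ((m i : ℝ) + 1) * 2 ^ k - (m i : ℝ) * 2 ^ k = (2:ℝ) ^ k := by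
      intro i; ring
    simp only [h1]
    rw [Finset.prod_const, Finset.card_univ, Fintype.card_fin]
    congr 1
    congr 1
    ring
  rw [hv]
  have h2 : (0:ℝ) < (2:ℝ) ^ k := by positivity
  constructor
  · apply ENNReal.mul_pos
    · exact (ENNReal.pow_pos (ENNReal.ofReal_pos.2 h2) n).ne'
    · exact (ENNReal.ofReal_pos.2 (by linarith)).ne'
  · exact ENNReal.mul_lt_top (ENNReal.pow_lt_top ENNReal.ofReal_lt_top) ENNReal.ofReal_lt_top

end Aux
section Grid
variable {n : ℕ} {D : ℤ → Set (Set (Sp n))}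

lemma grid_meas (hD : IsDyadicGrid n D) {j R} (h : R ∈ D j) : MeasurableSet R :=
  czSet_measurable (hD.1 j R h)

lemma grid_pos (hD : IsDyadicGrid n D) {j R} (h : R ∈ D j) : 0 < volume R :=
  (czSet_vol (hD.1 j R h)).1

lemma grid_fin (hD : IsDyadicGrid n D) {j R} (h : R ∈ D j) : volume R < ⊤ :=
  (czSet_vol (hD.1 j R h)).2

lemma grid_eq_of_mem (hD : IsDyadicGrid n D) {k : ℤ} {T T' : Set (Sp n)}
    (hT : T ∈ D k) (hT' : T' ∈ D k) {y : Sp n} (hy : y ∈ T) (hy' : y ∈ T') : T = T' := by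
  by_contra h
  exact Set.disjoint_left.1 (hD.2.1 k hT hT' h) hy hy'

lemma grid_nested (hD : IsDyadicGrid n D) {l k : ℤ} {R R' : Set (Sp n)}
    (hR : R ∈ D l) (hR' : R' ∈ D k) (hne : (R ∩ R').Nonempty) : R ⊆ R' ∨ R' ⊆ R := by
  rcases le_total l k with h | h
  · rcases hD.2.2.2.1 l k h R hR R' hR' with h1 | h1
    · exact Or.inl h1
    · exact absurd h1 hne.ne_empty
  · rcases hD.2.2.2.1 k l h R' hR' R hR with h1 | h1
    · exact Or.inr h1
    · rw [Set.inter_comm] at h1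
      exact absurd h1 hne.ne_empty

lemma grid_exists_mem (hD : IsDyadicGrid n D) (k : ℤ) (x : Sp n) : ∃ T, T ∈ D k ∧ x ∈ T := by
  have := hD.2.2.1 k
  have hx : x ∈ ⋃₀ D k := this ▸ Set.mem_univ x
  obtain ⟨T, hT, hxT⟩ := hx
  exact ⟨T, hT, hxT⟩

/-- a child is at most 2/3 of its parent -/
lemma grid_child_le (hD : IsDyadicGrid n D) {j : ℤ} {R M : Set (Sp n)}
    (hR : R ∈ D j) (hM : M ∈ D (j + 1)) (hRM : R ⊆ M) (hne : R.Nonempty) :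
    volume R ≤ (2 / 3 : ℝ≥0∞) * volume M := by
  obtain ⟨k, hk, Rs, hRs, hdisj, hunion, hvol⟩ := hD.2.2.2.2.2.2.1 (j + 1) M hM
  have hcast : (j : ℤ) + 1 - 1 = j := by ring
  rw [hcast] at hRs
  obtain ⟨x, hx⟩ := hne
  have hxM : x ∈ M := hRM hx
  rw [hunion] at hxM
  obtain ⟨_, ⟨i, rfl⟩, hxi⟩ := hxM
  have hEq : R = Rs i := grid_eq_of_mem hD hR (hRs i) hx hxi
  rw [hEq]
  exact (hvol i).2

end Grid
section Maximal
variable {n : ℕ} {D : ℤ → Set (Set (Sp n))}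

open Classical in
/-- every element of a family `S ⊆ 𝒟` of uniformly bounded volume is contained
in a maximal element of `S`. -/
lemma grid_exists_maximal (hD : IsDyadicGrid n D) (S : Set (Set (Sp n)))
    (hS : ∀ R ∈ S, ∃ j, R ∈ D j) {V : ℝ≥0∞} (hV : V ≠ ⊤)
    (hb : ∀ R ∈ S, volume R ≤ V) {R : Set (Sp n)} (hR : R ∈ S) :
    ∃ R', R ⊆ R' ∧ R' ∈ S ∧ ∀ T ∈ S, R' ⊆ T → T = R' := by
  obtain ⟨j, hj⟩ := hS R hR
  have hRpos : 0 < volume R := grid_pos hD hj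
  obtain ⟨x, hx⟩ : R.Nonempty := nonempty_of_measure_ne_zero hRpos.ne'
  -- the chain of ancestors of `R` through `x`
  set A : ℕ → Set (Sp n) := fun m => Classical.choose (grid_exists_mem hD (j + m) x) with hA
  have hAmem : ∀ m : ℕ, A m ∈ D (j + m) ∧ x ∈ A m := fun m =>
    Classical.choose_spec (grid_exists_mem hD (j + m) x)
  have hA0 : A 0 = R := by
    have h0 := hAmem 0
    simp only [Nat.cast_zero, add_zero] at h0
    exact grid_eq_of_mem hD h0.1 hj h0.2 hx
  have hstep : ∀ m : ℕ, A m ⊆ A (m + 1) := by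
    intro m
    obtain ⟨P, ⟨hP, hPsub⟩, _⟩ := hD.2.2.2.2.1 (j + m) (A m) (hAmem m).1
    have hcast : (j : ℤ) + m + 1 = j + (m + 1 : ℕ) := by push_cast; ring
    rw [hcast] at hP
    have : P = A (m + 1) := grid_eq_of_mem hD hP (hAmem (m + 1)).1 (hPsub (hAmem m).2) (hAmem (m+1)).2
    exact this ▸ hPsub
  have hmono : ∀ p q : ℕ, p ≤ q → A p ⊆ A q := by
    intro p q hpq
    induction q with
    | zero => rw [Nat.le_zero.1 hpq]
    | succ q ih =>
      rcases Nat.lt_or_ge p (q + 1) with h | h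
      · exact (ih (Nat.lt_succ_iff.1 h)).trans (hstep q)
      · rw [Nat.le_antisymm hpq h]
  have hgrow : ∀ m : ℕ, volume (A m) ≤ (2 / 3 : ℝ≥0∞) ^ m * volume (A m) → True := fun _ _ => trivial
  -- volume decay along the chain, downwards
  have hdecay : ∀ m : ℕ, volume R ≤ (2 / 3 : ℝ≥0∞) ^ m * volume (A m) := by
    intro m
    induction m with
    | zero => simp [hA0]
    | succ m ih =>
      have hch : volume (A m) ≤ (2 / 3 : ℝ≥0∞) * volume (A (m + 1)) := by
        have hcast : (j : ℤ) + m + 1 = j + (m + 1 : ℕ) := by push_cast; ring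
        exact grid_child_le hD (hAmem m).1 (hcast ▸ (hAmem (m+1)).1) (hstep m) ⟨x, (hAmem m).2⟩
      calc volume R ≤ (2 / 3 : ℝ≥0∞) ^ m * volume (A m) := ih
        _ ≤ (2 / 3 : ℝ≥0∞) ^ m * ((2 / 3 : ℝ≥0∞) * volume (A (m + 1))) := by
            exact mul_le_mul_right hch _
        _ = (2 / 3 : ℝ≥0∞) ^ (m + 1) * volume (A (m + 1)) := by ring
  -- beyond some index, the ancestors leave `S`
  obtain ⟨m₀, hm₀⟩ : ∃ m₀ : ℕ, (2 / 3 : ℝ≥0∞) ^ m₀ * V < volume R := by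
    have htend : Filter.Tendsto (fun m : ℕ => (2 / 3 : ℝ≥0∞) ^ m * V) Filter.atTop (nhds 0) := by
      have h23 : (2 / 3 : ℝ≥0∞) < 1 := by
        rw [ENNReal.div_lt_iff (by norm_num) (by norm_num)]
        · norm_num
      have := ENNReal.Tendsto.mul_const (ENNReal.tendsto_pow_atTop_nhds_zero_of_lt_one h23)
        (Or.inr hV)
      simpa using this
    exact (htend.eventually_lt_const hRpos).exists
  have hbig : ∀ q : ℕ, m₀ ≤ q → A q ∉ S := by
    intro q hq hAq
    have h1 : volume R ≤ (2 / 3 : ℝ≥0∞) ^ q * V :=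
      (hdecay q).trans (mul_le_mul_right (hb _ hAq) _)
    have h2 : (2 / 3 : ℝ≥0∞) ^ q ≤ (2 / 3 : ℝ≥0∞) ^ m₀ :=
      pow_le_pow_right_of_le_one' (by
        rw [ENNReal.div_le_iff (by norm_num) (by norm_num)]; norm_num : (2/3:ℝ≥0∞) ≤ 1) hq
    exact absurd (h1.trans (mul_le_mul_left h2 V)) (not_le.2 hm₀)
  -- the greatest index `p ≤ m₀` with `A p ∈ S`
  set p := Nat.findGreatest (fun i => A i ∈ S) m₀ with hp
  have hpS : A p ∈ S := Nat.findGreatest_spec (P := fun i => A i ∈ S) (Nat.zero_le m₀) (show A 0 ∈ S by rw [hA0]; exact hR)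
  have hnotS : ∀ q : ℕ, p < q → A q ∉ S := by
    intro q hq
    rcases Nat.lt_or_ge m₀ q with h | h
    · exact hbig q h.le
    · exact Nat.findGreatest_is_greatest hq h
  refine ⟨A p, hA0 ▸ hmono 0 p (Nat.zero_le p), hpS, ?_⟩
  intro T hT hsub
  obtain ⟨k, hk⟩ := hS T hT
  rcases le_or_gt k (j + p) with h | h
  · rcases hD.2.2.2.1 k (j + p) h T hk (A p) (hAmem p).1 with h1 | h1
    · exact subset_antisymm h1 hsub
    · exact absurd h1 (Set.nonempty_iff_ne_empty.1 ⟨x, hsub (hAmem p).2, (hAmem p).2⟩)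
  · set d := (k - (j + p)).toNat with hd
    have hdk : (j : ℤ) + (p + d : ℕ) = k := by
      have : (d : ℤ) = k - (j + p) := Int.toNat_of_nonneg (by omega)
      push_cast
      omega
    have hTA : T = A (p + d) := grid_eq_of_mem hD hk (hdk ▸ (hAmem (p + d)).1)
      (hsub (hAmem p).2) (hAmem (p + d)).2
    have hd0 : 0 < d := by
      have : (d : ℤ) = k - (j + p) := Int.toNat_of_nonneg (by omega)
      omega
    exact absurd (hTA ▸ hT) (hnotS (p + d) (by omega))

end Maximal
section An
variable {n : ℕ} {D : ℤ → Set (Set (Sp n))}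

lemma lt_maximalFn_iff {𝒜 : Set (Set (Sp n))} {f : Sp n → ℝ} {x : Sp n} {β : ℝ≥0∞} :
    β < maximalFn n 𝒜 f x ↔
      ∃ R ∈ 𝒜, x ∈ R ∧ β < (volume R)⁻¹ * ∫⁻ y in R, ‖f y‖₊ ∂volume := by
  simp only [maximalFn, lt_iSup_iff, exists_prop]

lemma le_sharpFn {𝒜 : Set (Set (Sp n))} {f : Sp n → ℝ} {x : Sp n} {M : Set (Sp n)}
    (hM : M ∈ 𝒜) (hx : x ∈ M) :
    (volume M)⁻¹ * ∫⁻ y in M,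
        ENNReal.ofReal |f y - (volume M).toReal⁻¹ * ∫ z in M, f z ∂volume| ∂volume
      ≤ sharpFn n 𝒜 f x := by
  refine le_trans ?_ (le_iSup _ M)
  refine le_trans ?_ (le_iSup _ hM)
  exact le_iSup (fun _ : x ∈ M => _) hx

lemma le_maximalFn {𝒜 : Set (Set (Sp n))} {f : Sp n → ℝ} {x : Sp n} {M : Set (Sp n)}
    (hM : M ∈ 𝒜) (hx : x ∈ M) :
    (volume M)⁻¹ * ∫⁻ y in M, ‖f y‖₊ ∂volume ≤ maximalFn n 𝒜 f x := by
  refine le_trans ?_ (le_iSup _ M)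
  refine le_trans ?_ (le_iSup _ hM)
  exact le_iSup (fun _ : x ∈ M => _) hx

lemma countable_family {ℳ : Set (Set (Sp n))}
    (hmeas : ∀ R ∈ ℳ, MeasurableSet R) (hpos : ∀ R ∈ ℳ, 0 < volume R)
    (hdisj : ℳ.PairwiseDisjoint id) : ℳ.Countable := by
  have h := MeasureTheory.Measure.countable_meas_pos_of_disjoint_iUnion
    (μ := (volume : Measure (Sp n))) (As := fun i : ↥ℳ => (i : Set (Sp n)))
    (fun i => hmeas i i.2) ?_
  · have : {i : ↥ℳ | 0 < volume (i : Set (Sp n))} = Set.univ := by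
      ext i; simp [hpos i i.2]
    rw [this, Set.countable_univ_iff] at h
    exact Set.countable_coe_iff.1 h
  · intro i j hij
    exact hdisj i.2 j.2 (fun h => hij (Subtype.ext h))

lemma sum_bound {ℳ : Set (Set (Sp n))} (hc : ℳ.Countable)
    (hmeas : ∀ R ∈ ℳ, MeasurableSet R) (hdisj : ℳ.PairwiseDisjoint id)
    (g : Sp n → ℝ≥0∞) (lam : ℝ≥0∞)
    (hbound : ∀ R ∈ ℳ, lam * volume R ≤ ∫⁻ y in R, g y ∂volume) :
    lam * volume (⋃₀ ℳ) ≤ ∫⁻ y in ⋃₀ ℳ, g y ∂volume := by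
  haveI := hc.to_subtype
  set F : ↥ℳ → Set (Sp n) := fun i => i.1 with hF
  have hFm : ∀ i, MeasurableSet (F i) := fun i => hmeas i.1 i.2
  have hd : Pairwise (Function.onFun Disjoint F) := by
    intro i j hij
    exact hdisj i.2 j.2 (fun h => hij (Subtype.ext h))
  have hU : ⋃₀ ℳ = ⋃ i, F i := Set.sUnion_eq_iUnion
  have h1 : volume (⋃ i, F i) = ∑' i, volume (F i) := measure_iUnion hd hFm
  have h2 : ∫⁻ y in ⋃ i, F i, g y ∂volume = ∑' i, ∫⁻ y in F i, g y ∂volume :=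
    lintegral_iUnion hFm hd g
  rw [hU, h1, h2, ← ENNReal.tsum_mul_left]
  exact ENNReal.tsum_le_tsum fun i => hbound i.1 i.2

end An
section Core
variable {n : ℕ} {D : ℤ → Set (Set (Sp n))}

lemma core_estimate (hD : IsDyadicGrid n D) {f : Sp n → ℝ}
    {c b α : ℝ} (hc : 0 < c) (hb : 0 < b) (hb1 : b < 1) (hα : 0 < α)
    {Rst : Set (Sp n)}
    (hRst : Rst ∈ {R : Set (Sp n) | (∃ j, R ∈ D j) ∧
      ENNReal.ofReal (b * α) < (volume R)⁻¹ * ∫⁻ y in R, ‖f y‖₊ ∂volume})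
    (hmax : ∀ T ∈ {R : Set (Sp n) | (∃ j, R ∈ D j) ∧
      ENNReal.ofReal (b * α) < (volume R)⁻¹ * ∫⁻ y in R, ‖f y‖₊ ∂volume}, Rst ⊆ T → T = Rst) :
    volume ({x : Sp n | ENNReal.ofReal α < maximalFn n (⋃ j, D j) f x ∧
        sharpFn n (⋃ j, D j) f x ≤ ENNReal.ofReal (c * α)} ∩ Rst)
      ≤ (2 ^ n : ℝ≥0∞) * ENNReal.ofReal (c / (1 - b)) * volume Rst := by
  classical
  set 𝒮 : Set (Set (Sp n)) := {R : Set (Sp n) | (∃ j, R ∈ D j) ∧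
      ENNReal.ofReal (b * α) < (volume R)⁻¹ * ∫⁻ y in R, ‖f y‖₊ ∂volume} with h𝒮
  set E : Set (Sp n) := {x : Sp n | ENNReal.ofReal α < maximalFn n (⋃ j, D j) f x ∧
      sharpFn n (⋃ j, D j) f x ≤ ENNReal.ofReal (c * α)} with hE
  rcases (E ∩ Rst).eq_empty_or_nonempty with hemp | ⟨x₀, hx₀⟩
  · rw [hemp, measure_empty]; exact zero_le
  obtain ⟨⟨js, hjs⟩, hRavg⟩ := hRst
  have hRpos := grid_pos hD hjs
  have hRfin := grid_fin hD hjs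
  -- the parent M of Rst
  obtain ⟨M, ⟨hM, hRM⟩, -⟩ := hD.2.2.2.2.1 js Rst hjs
  have hMvol : volume M ≤ 2 ^ n * volume Rst := hD.2.2.2.2.2.1 js Rst hjs M hM hRM
  have hMpos := grid_pos hD hM
  have hMfin := grid_fin hD hM
  have hM𝒜 : M ∈ ⋃ j, D j := Set.mem_iUnion.2 ⟨js + 1, hM⟩
  -- M is not in 𝒮, so its average is at most bα
  have hMne : M ≠ Rst := by
    intro h
    have hle : volume Rst ≤ (2 / 3 : ℝ≥0∞) * volume Rst :=
      grid_child_le hD hjs (h ▸ hM) (subset_refl Rst)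
        (nonempty_of_measure_ne_zero hRpos.ne')
    have hlt : (2 / 3 : ℝ≥0∞) * volume Rst < 1 * volume Rst := by
      apply ENNReal.mul_lt_mul_left hRpos.ne' hRfin.ne
      rw [ENNReal.div_lt_iff (by norm_num) (by norm_num)]
      norm_num
    rw [one_mul] at hlt
    exact absurd (hle.trans_lt hlt) (lt_irrefl _)
  have hMavg : (volume M)⁻¹ * ∫⁻ y in M, ‖f y‖₊ ∂volume ≤ ENNReal.ofReal (b * α) := by
    by_contra h
    exact hMne (hmax M ⟨⟨js + 1, hM⟩, not_le.1 h⟩ hRM)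
  have hIM : ∫⁻ y in M, (‖f y‖₊ : ℝ≥0∞) ∂volume ≤ volume M * ENNReal.ofReal (b * α) :=
    (ENNReal.inv_mul_le_iff hMpos.ne' hMfin.ne).1 hMavg
  -- the average of f on M
  set fM : ℝ := (volume M).toReal⁻¹ * ∫ z in M, f z ∂volume with hfM
  have htRpos : 0 < (volume M).toReal := ENNReal.toReal_pos hMpos.ne' hMfin.ne
  have hfMle : |fM| ≤ b * α := by
    have h1 : ‖∫ z in M, f z ∂volume‖ ≤
        (∫⁻ z in M, ENNReal.ofReal ‖f z‖ ∂volume).toReal := norm_integral_le_lintegral_norm _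
    have h2 : ∫⁻ z in M, ENNReal.ofReal ‖f z‖ ∂volume = ∫⁻ z in M, (‖f z‖₊ : ℝ≥0∞) ∂volume := by
      simp only [Real.norm_eq_abs, ← Real.enorm_eq_ofReal_abs, enorm_eq_nnnorm]
    have h3 : (∫⁻ z in M, ENNReal.ofReal ‖f z‖ ∂volume).toReal ≤
        (volume M).toReal * (b * α) := by
      rw [h2]
      calc (∫⁻ z in M, (‖f z‖₊ : ℝ≥0∞) ∂volume).toReal
          ≤ (volume M * ENNReal.ofReal (b * α)).toReal := ENNReal.toReal_mono
            (ENNReal.mul_ne_top hMfin.ne ENNReal.ofReal_ne_top) hIM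
        _ = (volume M).toReal * (b * α) := by
            rw [ENNReal.toReal_mul, ENNReal.toReal_ofReal (by positivity)]
    calc |fM| = (volume M).toReal⁻¹ * ‖∫ z in M, f z ∂volume‖ := by
          rw [hfM, abs_mul, abs_of_nonneg (by positivity), Real.norm_eq_abs]
      _ ≤ (volume M).toReal⁻¹ * ((volume M).toReal * (b * α)) := by
          exact mul_le_mul_of_nonneg_left (h1.trans h3) (by positivity)
      _ = b * α := by field_simp
  -- sharp function bound on M
  have hMdiff : ∫⁻ y in M, ENNReal.ofReal |f y - fM| ∂volume
      ≤ volume M * ENNReal.ofReal (c * α) := by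
    refine (ENNReal.inv_mul_le_iff hMpos.ne' hMfin.ne).1 ?_
    exact (le_sharpFn hM𝒜 (hRM hx₀.2)).trans hx₀.1.2
  -- the family 𝒯
  set 𝒯 : Set (Set (Sp n)) := {T : Set (Sp n) | (∃ j, T ∈ D j) ∧ T ⊆ Rst ∧
      ENNReal.ofReal ((1 - b) * α) < (volume T)⁻¹ *
        ∫⁻ y in T, ENNReal.ofReal |f y - fM| ∂volume} with h𝒯
  set ℳ𝒯 : Set (Set (Sp n)) := {T | T ∈ 𝒯 ∧ ∀ T' ∈ 𝒯, T ⊆ T' → T' = T} with hℳ𝒯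
  have h𝒯D : ∀ T ∈ 𝒯, ∃ j, T ∈ D j := fun T hT => hT.1
  have h𝒯b : ∀ T ∈ 𝒯, volume T ≤ volume Rst := fun T hT => measure_mono hT.2.1
  -- E ∩ Rst is covered by the maximal elements of 𝒯
  have hcover : E ∩ Rst ⊆ ⋃₀ ℳ𝒯 := by
    rintro x ⟨hxE, hxR⟩
    obtain ⟨R, hR𝒜, hxRR, hRavg'⟩ := lt_maximalFn_iff.1 hxE.1
    obtain ⟨j', hj'⟩ := Set.mem_iUnion.1 hR𝒜
    have hR𝒮 : R ∈ 𝒮 := ⟨⟨j', hj'⟩, lt_of_le_of_lt (ENNReal.ofReal_le_ofReal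
      (by nlinarith)) hRavg'⟩
    have hRsub : R ⊆ Rst := by
      rcases grid_nested hD hj' hjs ⟨x, hxRR, hxR⟩ with h | h
      · exact h
      · exact (hmax R hR𝒮 h) ▸ Set.Subset.rfl
    -- R belongs to 𝒯
    have hptw : ∀ y : Sp n, (‖f y‖₊ : ℝ≥0∞) ≤
        ENNReal.ofReal |f y - fM| + ENNReal.ofReal (b * α) := by
      intro y
      rw [← enorm_eq_nnnorm, ← ofReal_norm, ← ENNReal.ofReal_add (abs_nonneg _) (by positivity)]
      apply ENNReal.ofReal_le_ofReal
      rw [Real.norm_eq_abs]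
      calc |f y| = |(f y - fM) + fM| := by ring_nf
        _ ≤ |f y - fM| + |fM| := abs_add_le _ _
        _ ≤ |f y - fM| + b * α := by linarith
    have hRpos' := grid_pos hD hj'
    have hRfin' := grid_fin hD hj'
    have hint : ∫⁻ y in R, (‖f y‖₊ : ℝ≥0∞) ∂volume ≤
        (∫⁻ y in R, ENNReal.ofReal |f y - fM| ∂volume) + ENNReal.ofReal (b * α) * volume R := by
      calc ∫⁻ y in R, (‖f y‖₊ : ℝ≥0∞) ∂volume
          ≤ ∫⁻ y in R, (ENNReal.ofReal |f y - fM| + ENNReal.ofReal (b * α)) ∂volume :=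
            lintegral_mono fun y => hptw y
        _ = (∫⁻ y in R, ENNReal.ofReal |f y - fM| ∂volume) + ENNReal.ofReal (b * α) * volume R := by
            rw [lintegral_add_right _ measurable_const, setLIntegral_const]
    have havgR : (volume R)⁻¹ * ∫⁻ y in R, (‖f y‖₊ : ℝ≥0∞) ∂volume ≤
        (volume R)⁻¹ * (∫⁻ y in R, ENNReal.ofReal |f y - fM| ∂volume) + ENNReal.ofReal (b * α) := by
      calc (volume R)⁻¹ * ∫⁻ y in R, (‖f y‖₊ : ℝ≥0∞) ∂volume
          ≤ (volume R)⁻¹ * ((∫⁻ y in R, ENNReal.ofReal |f y - fM| ∂volume)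
            + ENNReal.ofReal (b * α) * volume R) := mul_le_mul_right hint _
        _ = (volume R)⁻¹ * (∫⁻ y in R, ENNReal.ofReal |f y - fM| ∂volume)
            + ENNReal.ofReal (b * α) := by
            rw [mul_add]
            congr 1
            rw [mul_comm (ENNReal.ofReal (b * α)) (volume R), ← mul_assoc,
              ENNReal.inv_mul_cancel hRpos'.ne' hRfin'.ne, one_mul]
    have hRdiff : ENNReal.ofReal ((1 - b) * α) < (volume R)⁻¹ *
        ∫⁻ y in R, ENNReal.ofReal |f y - fM| ∂volume := by
      have hsplit : ENNReal.ofReal α =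
          ENNReal.ofReal ((1 - b) * α) + ENNReal.ofReal (b * α) := by
        rw [← ENNReal.ofReal_add (by nlinarith) (by positivity)]
        congr 1; ring
      have := lt_of_lt_of_le hRavg' havgR
      rw [hsplit] at this
      exact (ENNReal.add_lt_add_iff_right ENNReal.ofReal_ne_top).1 this
    have hR𝒯 : R ∈ 𝒯 := ⟨⟨j', hj'⟩, hRsub, hRdiff⟩
    obtain ⟨R', hRR', hR'𝒯, hR'max⟩ := grid_exists_maximal hD 𝒯 h𝒯D hRfin.ne h𝒯b hR𝒯
    exact ⟨R', ⟨hR'𝒯, hR'max⟩, hRR' hxRR⟩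
  -- the maximal elements are pairwise disjoint, countable, measurable
  have hmeasℳ : ∀ T ∈ ℳ𝒯, MeasurableSet T := by
    rintro T ⟨⟨⟨j, hj⟩, -⟩, -⟩; exact grid_meas hD hj
  have hdisjℳ : ℳ𝒯.PairwiseDisjoint id := by
    rintro T hT T' hT' hne
    rw [Function.onFun, Set.disjoint_left]
    intro y hyT hyT'
    obtain ⟨jT, hjT⟩ := hT.1.1
    obtain ⟨jT', hjT'⟩ := hT'.1.1
    rcases grid_nested hD hjT hjT' ⟨y, hyT, hyT'⟩ with h | h
    · exact hne (hT.2 T' hT'.1 h).symm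
    · exact hne (hT'.2 T hT.1 h)
  have hcntℳ : ℳ𝒯.Countable := countable_family hmeasℳ
    (by rintro T ⟨⟨⟨j, hj⟩, -⟩, -⟩; exact grid_pos hD hj) hdisjℳ
  -- summing the bound over the maximal elements
  have hsum : ENNReal.ofReal ((1 - b) * α) * volume (⋃₀ ℳ𝒯) ≤
      ∫⁻ y in ⋃₀ ℳ𝒯, ENNReal.ofReal |f y - fM| ∂volume := by
    refine sum_bound hcntℳ hmeasℳ hdisjℳ _ _ ?_
    rintro T ⟨⟨⟨j, hj⟩, -, hT⟩, -⟩
    have hTpos := grid_pos hD hj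
    have hTfin := grid_fin hD hj
    calc ENNReal.ofReal ((1 - b) * α) * volume T
        ≤ ((volume T)⁻¹ * ∫⁻ y in T, ENNReal.ofReal |f y - fM| ∂volume) * volume T :=
          mul_le_mul_left hT.le _
      _ = ∫⁻ y in T, ENNReal.ofReal |f y - fM| ∂volume := by
          rw [mul_comm (volume T)⁻¹, mul_assoc, ENNReal.inv_mul_cancel hTpos.ne' hTfin.ne,
            mul_one]
  have hUsub : ⋃₀ ℳ𝒯 ⊆ M := by
    apply Set.sUnion_subset
    rintro T ⟨⟨-, hTsub, -⟩, -⟩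
    exact hTsub.trans hRM
  have hchain : ENNReal.ofReal ((1 - b) * α) * volume (⋃₀ ℳ𝒯) ≤
      ENNReal.ofReal (c * α) * (2 ^ n * volume Rst) := by
    calc ENNReal.ofReal ((1 - b) * α) * volume (⋃₀ ℳ𝒯)
        ≤ ∫⁻ y in ⋃₀ ℳ𝒯, ENNReal.ofReal |f y - fM| ∂volume := hsum
      _ ≤ ∫⁻ y in M, ENNReal.ofReal |f y - fM| ∂volume := lintegral_mono_set hUsub
      _ ≤ volume M * ENNReal.ofReal (c * α) := hMdiff
      _ ≤ ENNReal.ofReal (c * α) * (2 ^ n * volume Rst) := by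
          rw [mul_comm]; exact mul_le_mul_right hMvol _
  -- divide
  have h1bα : (0:ℝ) < (1 - b) * α := by nlinarith
  have hfinal : volume (E ∩ Rst) ≤
      (ENNReal.ofReal ((1 - b) * α))⁻¹ * (ENNReal.ofReal (c * α) * (2 ^ n * volume Rst)) := by
    calc volume (E ∩ Rst) ≤ volume (⋃₀ ℳ𝒯) := measure_mono hcover
      _ = (ENNReal.ofReal ((1 - b) * α))⁻¹ *
          (ENNReal.ofReal ((1 - b) * α) * volume (⋃₀ ℳ𝒯)) := by
          rw [← mul_assoc, ENNReal.inv_mul_cancel (by simpa using h1bα) ENNReal.ofReal_ne_top,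
            one_mul]
      _ ≤ _ := mul_le_mul_right hchain _
  refine hfinal.trans (le_of_eq ?_)
  have hdiv : (ENNReal.ofReal ((1 - b) * α))⁻¹ * ENNReal.ofReal (c * α)
      = ENNReal.ofReal (c / (1 - b)) := by
    rw [mul_comm, ← div_eq_mul_inv, ← ENNReal.ofReal_div_of_pos h1bα]
    congr 1
    rw [mul_div_mul_right _ _ hα.ne']
  rw [← mul_assoc, ← mul_assoc, hdiv]
  ring

end Core
/-- relative distributional inequality. There exists `K > 0`, depending
only on `n`, such that for every dyadic grid, every locally integrable `f`, all `c > 0`,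
`0 < b < 1` and `α > 0`,
`ρ({ℳ_𝒟 f > α, f♯_𝒟 ≤ cα}) ≤ K (c/(1−b)) ρ({ℳ_𝒟 f > bα})`. -/
theorem relative_distributional_inequality (n : ℕ) (hn : 1 ≤ n) :
    ∃ K : ℝ, 0 < K ∧ ∀ D : ℤ → Set (Set (Sp n)), IsDyadicGrid n D →
      ∀ f : Sp n → ℝ, LocallyIntegrable f volume →
      ∀ c b : ℝ, 0 < c → 0 < b → b < 1 → ∀ α : ℝ, 0 < α →
        volume {x : Sp n | ENNReal.ofReal α < maximalFn n (⋃ j, D j) f x ∧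
            sharpFn n (⋃ j, D j) f x ≤ ENNReal.ofReal (c * α)}
          ≤ ENNReal.ofReal (K * c / (1 - b)) *
            volume {x : Sp n | ENNReal.ofReal (b * α) < maximalFn n (⋃ j, D j) f x} := by
  refine ⟨2 ^ n, by positivity, ?_⟩
  intro D hD f hf c b hc hb hb1 α hα
  have hb' : (0:ℝ) < 1 - b := by linarith
  have hKpos : (0:ℝ) < 2 ^ n * c / (1 - b) := by positivity
  set E : Set (Sp n) := {x : Sp n | ENNReal.ofReal α < maximalFn n (⋃ j, D j) f x ∧
      sharpFn n (⋃ j, D j) f x ≤ ENNReal.ofReal (c * α)} with hE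
  set Ωb : Set (Sp n) := {x : Sp n | ENNReal.ofReal (b * α) < maximalFn n (⋃ j, D j) f x}
    with hΩ
  rcases eq_top_or_lt_top (volume Ωb) with htop | hfin
  · rw [htop, ENNReal.mul_top (ENNReal.ofReal_pos.2 hKpos).ne']
    exact le_top
  set 𝒮 : Set (Set (Sp n)) := {R : Set (Sp n) | (∃ j, R ∈ D j) ∧
      ENNReal.ofReal (b * α) < (volume R)⁻¹ * ∫⁻ y in R, ‖f y‖₊ ∂volume} with h𝒮
  have h𝒮sub : ∀ R ∈ 𝒮, R ⊆ Ωb := by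
    rintro R ⟨⟨j, hj⟩, havg⟩ y hy
    exact lt_of_lt_of_le havg (le_maximalFn (Set.mem_iUnion.2 ⟨j, hj⟩) hy)
  have h𝒮D : ∀ R ∈ 𝒮, ∃ j, R ∈ D j := fun R hR => hR.1
  have h𝒮b : ∀ R ∈ 𝒮, volume R ≤ volume Ωb := fun R hR => measure_mono (h𝒮sub R hR)
  set ℳ : Set (Set (Sp n)) := {R | R ∈ 𝒮 ∧ ∀ T ∈ 𝒮, R ⊆ T → T = R} with hℳ
  have hEsub : E ⊆ ⋃₀ ℳ := by
    intro x hx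
    obtain ⟨R, hR𝒜, hxR, havg⟩ := lt_maximalFn_iff.1 hx.1
    obtain ⟨j, hj⟩ := Set.mem_iUnion.1 hR𝒜
    have hR𝒮 : R ∈ 𝒮 := ⟨⟨j, hj⟩,
      lt_of_le_of_lt (ENNReal.ofReal_le_ofReal (by nlinarith)) havg⟩
    obtain ⟨R', hRR', hR'𝒮, hR'max⟩ := grid_exists_maximal hD 𝒮 h𝒮D hfin.ne h𝒮b hR𝒮
    exact ⟨R', ⟨hR'𝒮, hR'max⟩, hRR' hxR⟩
  have hmeasℳ : ∀ R ∈ ℳ, MeasurableSet R := by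
    rintro R ⟨⟨⟨j, hj⟩, -⟩, -⟩; exact grid_meas hD hj
  have hdisjℳ : ℳ.PairwiseDisjoint id := by
    rintro T hT T' hT' hne
    rw [Function.onFun, Set.disjoint_left]
    intro y hyT hyT'
    obtain ⟨jT, hjT⟩ := hT.1.1
    obtain ⟨jT', hjT'⟩ := hT'.1.1
    rcases grid_nested hD hjT hjT' ⟨y, hyT, hyT'⟩ with h | h
    · exact hne (hT.2 T' hT'.1 h).symm
    · exact hne (hT'.2 T hT.1 h)
  have hcntℳ : ℳ.Countable := countable_family hmeasℳ
    (by rintro R ⟨⟨⟨j, hj⟩, -⟩, -⟩; exact grid_pos hD hj) hdisjℳ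
  haveI := hcntℳ.to_subtype
  have hper : ∀ R : ↥ℳ, volume (E ∩ (R : Set (Sp n))) ≤
      (2 ^ n : ℝ≥0∞) * ENNReal.ofReal (c / (1 - b)) * volume (R : Set (Sp n)) :=
    fun R => core_estimate hD hc hb hb1 hα R.2.1 R.2.2
  have hconst : (2 ^ n : ℝ≥0∞) * ENNReal.ofReal (c / (1 - b))
      = ENNReal.ofReal (2 ^ n * c / (1 - b)) := by
    rw [mul_div_assoc, ENNReal.ofReal_mul (by positivity),
      ENNReal.ofReal_pow (by norm_num : (0:ℝ) ≤ 2)]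
    norm_num
  calc volume E ≤ volume (⋃ R : ↥ℳ, (E ∩ (R : Set (Sp n)))) := by
        apply measure_mono
        intro x hx
        obtain ⟨R, hR, hxR⟩ := hEsub hx
        exact Set.mem_iUnion.2 ⟨⟨R, hR⟩, hx, hxR⟩
    _ ≤ ∑' R : ↥ℳ, volume (E ∩ (R : Set (Sp n))) := measure_iUnion_le _
    _ ≤ ∑' R : ↥ℳ, (2 ^ n : ℝ≥0∞) * ENNReal.ofReal (c / (1 - b)) * volume (R : Set (Sp n)) :=
        ENNReal.tsum_le_tsum hper
    _ = (2 ^ n : ℝ≥0∞) * ENNReal.ofReal (c / (1 - b)) * ∑' R : ↥ℳ, volume (R : Set (Sp n)) :=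
        ENNReal.tsum_mul_left
    _ = (2 ^ n : ℝ≥0∞) * ENNReal.ofReal (c / (1 - b)) * volume (⋃₀ ℳ) := by
        rw [measure_sUnion hcntℳ hdisjℳ hmeasℳ]
    _ ≤ ENNReal.ofReal (2 ^ n * c / (1 - b)) * volume Ωb := by
        rw [hconst]
        exact mul_le_mul_right (measure_mono (Set.sUnion_subset fun R hR => h𝒮sub R hR.1)) _
end
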